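/- arXiv:1111.1295 — 3 statements merged into one kernel-verified Lean document; each statement's English description precedes it below -/
import Mathlib

section
/- (Weitzenböck-type identity) For all natural numbers k ≥ 1 and q ≥ 1 with n = k + q, the identity d̆*_q ∘ d̆_q + d̆_{q−1} ∘ d̆*_{q−1} = (k + q)·id holds on H_{k,q}. -/
open scoped BigOperators

set_option linter.unusedSectionVars false

noncomputable section

variable (F : Type*) [Field F] [CharZero F] (H : Type*) [AddCommGroup H] [Module F H]

/-- The `n`-th tensor power of `H` over `F`. -/
abbrev TP (n : ℕ) : Type _ := PiTensorProduct F (fun _ : Fin n => H)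

/-- The action of a permutation `σ ∈ S_n` on the `n`-th tensor power,
permuting the tensor factors. -/
def permMap (n : ℕ) (σ : Equiv.Perm (Fin n)) : TP F H n →ₗ[F] TP F H n :=
  (PiTensorProduct.reindex F (fun _ : Fin n => H) σ).toLinearMap

/-- Identification of tensor powers of equal degrees. -/
def tpCast {m m' : ℕ} (hm : m = m') : TP F H m →ₗ[F] TP F H m' :=
  (PiTensorProduct.reindex F (fun _ : Fin m => H) (finCongr hm)).toLinearMap

/-- The permutations of `{1, …, n}` moving only positions in `a`. -/
def permsOn (n : ℕ) (a : Finset (Fin n)) : Finset (Equiv.Perm (Fin n)) :=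
  Finset.univ.filter fun σ => ∀ i, i ∉ a → σ i = i

/-- `S_a`: symmetrisation over the positions in `a` (the average over all
permutations of the positions in `a`, fixing the other positions). -/
def symOn (n : ℕ) (a : Finset (Fin n)) : TP F H n →ₗ[F] TP F H n :=
  (a.card.factorial : F)⁻¹ • ∑ σ ∈ permsOn n a, permMap F H n σ

/-- `A_a`: skew-symmetrisation over the positions in `a` (the signed average over
all permutations of the positions in `a`, fixing the other positions). -/
def altOn (n : ℕ) (a : Finset (Fin n)) : TP F H n →ₗ[F] TP F H n :=
  (a.card.factorial : F)⁻¹ • ∑ σ ∈ permsOn n a, (Equiv.Perm.sign σ : ℤ) • permMap F H n σ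

/-- The first `k` positions of `{1, …, n}`. -/
def firstSet (n k : ℕ) : Finset (Fin n) := Finset.univ.filter fun i => (i : ℕ) < k

/-- The last `m` positions of `{1, …, n}`. -/
def lastSet (n m : ℕ) : Finset (Fin n) := Finset.univ.filter fun i => n - m ≤ (i : ℕ)

/-- `H^{⊙a,∧aᶜ}`: the image of `S_a ∘ A_{aᶜ}`, the subspace of `n`-tensors symmetric in
the positions of `a` and skew-symmetric in the positions of `aᶜ`. -/
def Hgen (n : ℕ) (a : Finset (Fin n)) : Submodule F (TP F H n) :=
  LinearMap.range (symOn F H n a ∘ₗ altOn F H n aᶜ)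

/-- `H_{k,n-k} = H^{⊙k} ⊗ H^{∧(n-k)}`: the subspace of `n`-tensors symmetric in the
first `k` positions and skew-symmetric in the remaining positions. -/
def Hmix (n k : ℕ) : Submodule F (TP F H n) := Hgen F H n (firstSet n k)

/-- `H^{⊙[k],∧[n-k]}`: the span of the subspaces `H^{⊙a,∧aᶜ}` over all `k`-element
subsets `a ⊆ {1, …, n}`. -/
def HmixSpan (n k : ℕ) : Submodule F (TP F H n) :=
  ⨆ a ∈ {a : Finset (Fin n) | a.card = k}, Hgen F H n a

/-- The global operator whose restriction to `H_{k,q}` (with `m = q + 1`, `n = k + q`)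
is `d̆_q`: skew-symmetrisation of the last `m` positions, scaled by `m`. -/
def dOp (n m : ℕ) : TP F H n →ₗ[F] TP F H n := (m : F) • altOn F H n (lastSet n m)

/-- The global operator whose restriction to `H_{k-1,q+1}` (with `m = k`, `n = k + q`)
is `d̆*_q`: symmetrisation of the first `m` positions, scaled by `m`. -/
def dStarOp (n m : ℕ) : TP F H n →ₗ[F] TP F H n := (m : F) • symOn F H n (firstSet n m)

/-- The elementary element `h₁⊙…⊙h_k ⊗ x₁∧…∧x_q` of `H_{k,q} ⊆ H^{⊗(k+q)}`. -/
def elem (k q : ℕ) (h : Fin k → H) (x : Fin q → H) : TP F H (k + q) :=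
  ∑ ρ : Equiv.Perm (Fin k), ∑ τ : Equiv.Perm (Fin q),
    (Equiv.Perm.sign τ : ℤ) •
      (PiTensorProduct.tprod F (Fin.append (h ∘ ρ) (x ∘ τ)) : TP F H (k + q))

open Equiv Finset

-- sign as an element of F
def sgnF {n : ℕ} (σ : Equiv.Perm (Fin n)) : F := ((Equiv.Perm.sign σ : ℤ) : F)

lemma sgnF_mul {n : ℕ} (σ τ : Equiv.Perm (Fin n)) :
    sgnF F (σ * τ) = sgnF F σ * sgnF F τ := by
  simp [sgnF]

lemma sgnF_one {n : ℕ} : sgnF F (1 : Equiv.Perm (Fin n)) = 1 := by simp [sgnF]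

lemma sgnF_mul_self {n : ℕ} (σ : Equiv.Perm (Fin n)) : sgnF F σ * sgnF F σ = 1 := by
  simp [sgnF, ← Int.cast_mul, ← Units.val_mul]

lemma wb_mem_permsOn {n : ℕ} {a : Finset (Fin n)} {σ : Equiv.Perm (Fin n)} :
    σ ∈ permsOn n a ↔ ∀ i ∉ a, σ i = i := by
  simp [permsOn]

lemma wb_one_mem {n : ℕ} (a : Finset (Fin n)) : (1 : Equiv.Perm (Fin n)) ∈ permsOn n a := by
  simp [wb_mem_permsOn]

lemma wb_mul_mem {n : ℕ} {a : Finset (Fin n)} {σ τ : Equiv.Perm (Fin n)}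
    (hσ : σ ∈ permsOn n a) (hτ : τ ∈ permsOn n a) : σ * τ ∈ permsOn n a := by
  rw [wb_mem_permsOn] at *
  intro i hi
  simp [Equiv.Perm.mul_apply, hτ i hi, hσ i hi]

lemma wb_inv_mem {n : ℕ} {a : Finset (Fin n)} {σ : Equiv.Perm (Fin n)}
    (hσ : σ ∈ permsOn n a) : σ⁻¹ ∈ permsOn n a := by
  rw [wb_mem_permsOn] at *
  intro i hi
  have h := congrArg (fun y => σ⁻¹ y) (hσ i hi)
  simpa using h.symm

lemma wb_apply_mem {n : ℕ} {a : Finset (Fin n)} {σ : Equiv.Perm (Fin n)}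
    (hσ : σ ∈ permsOn n a) {p : Fin n} (hp : p ∈ a) : σ p ∈ a := by
  by_contra hc
  rw [wb_mem_permsOn] at hσ
  have h2 := hσ (σ p) hc
  have h3 : σ p = p := σ.injective h2
  rw [h3] at hc
  exact hc hp

lemma wb_mono {n : ℕ} {a b : Finset (Fin n)} (hba : b ⊆ a) :
    permsOn n b ⊆ permsOn n a := by
  intro σ hσ
  rw [wb_mem_permsOn] at *
  exact fun i hi => hσ i (fun h => hi (hba h))

lemma wb_swap_mem {n : ℕ} {a : Finset (Fin n)} {p j : Fin n} (hp : p ∈ a) (hj : j ∈ a) :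
    Equiv.swap p j ∈ permsOn n a := by
  rw [wb_mem_permsOn]
  intro i hi
  exact Equiv.swap_apply_of_ne_of_ne (fun h => hi (h ▸ hp)) (fun h => hi (h ▸ hj))

lemma wb_card_permsOn {n : ℕ} (a : Finset (Fin n)) :
    (permsOn n a).card = a.card.factorial := by
  classical
  have himg : permsOn n a =
      (Finset.univ : Finset (Equiv.Perm {x // x ∈ a})).image Equiv.Perm.ofSubtype := by
    ext σ
    simp only [Finset.mem_image, Finset.mem_univ, true_and, wb_mem_permsOn]
    constructor
    · rintro hσ
      have h₁ : ∀ x, x ∈ a ↔ σ x ∈ a := by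
        intro x
        constructor
        · intro hx
          by_contra hc
          have h2 := hσ (σ x) hc
          have h3 : σ x = x := σ.injective h2
          rw [h3] at hc
          exact hc hx
        · intro hx
          by_contra hc
          exact hc (hσ x hc ▸ hx)
      refine ⟨σ.subtypePerm (fun x => (h₁ x).symm), ?_⟩
      exact Equiv.Perm.ofSubtype_subtypePerm (fun x => (h₁ x).symm) (fun x hx => by
        by_contra hc; exact hx (hσ x hc))
    · rintro ⟨f, rfl⟩ i hi
      exact Equiv.Perm.ofSubtype_apply_of_not_mem f hi
  have hinj : Function.Injective
      (Equiv.Perm.ofSubtype : Equiv.Perm {x // x ∈ a} → Equiv.Perm (Fin n)) := by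
    intro f g hfg
    ext x
    have this : Equiv.Perm.ofSubtype f x.1 = Equiv.Perm.ofSubtype g x.1 := by rw [hfg]
    rw [Equiv.Perm.ofSubtype_apply_of_mem f x.2, Equiv.Perm.ofSubtype_apply_of_mem g x.2] at this
    exact congrArg Fin.val (by simpa using this)
  rw [himg, Finset.card_image_of_injective _ hinj,
    Finset.card_univ, Fintype.card_perm, Fintype.card_coe]


lemma wb_symOn_apply {n : ℕ} (a : Finset (Fin n)) (u : TP F H n) :
    symOn F H n a u = (a.card.factorial : F)⁻¹ •
      ∑ σ ∈ permsOn n a, permMap F H n σ u := by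
  simp [symOn, LinearMap.sum_apply]

lemma wb_altOn_apply {n : ℕ} (a : Finset (Fin n)) (u : TP F H n) :
    altOn F H n a u = (a.card.factorial : F)⁻¹ •
      ∑ σ ∈ permsOn n a, sgnF F σ • permMap F H n σ u := by
  simp only [altOn, LinearMap.smul_apply, LinearMap.sum_apply, sgnF,
    Int.cast_smul_eq_zsmul]
  rfl

lemma wb_permMap_permMap {n : ℕ} (σ τ : Equiv.Perm (Fin n)) (u : TP F H n) :
    permMap F H n σ (permMap F H n τ u) = permMap F H n (σ * τ) u := by
  have h := PiTensorProduct.reindex_trans (R := F) (s := fun _ : Fin n => H)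
    (τ : Fin n ≃ Fin n) (σ : Fin n ≃ Fin n)
  calc permMap F H n σ (permMap F H n τ u)
      = ((PiTensorProduct.reindex F (fun _ : Fin n => H) (τ : Fin n ≃ Fin n)).trans
          (PiTensorProduct.reindex F (fun _ : Fin n => H) (σ : Fin n ≃ Fin n))) u := rfl
    _ = permMap F H n (σ * τ) u := by rw [h]; rfl

lemma wb_permMap_one {n : ℕ} (u : TP F H n) : permMap F H n 1 u = u := by
  have h := PiTensorProduct.reindex_refl (R := F) (s := fun _ : Fin n => H)
  simp only [permMap]
  calc (PiTensorProduct.reindex F (fun _ : Fin n => H)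
        ((1 : Equiv.Perm (Fin n)) : Fin n ≃ Fin n)).toLinearMap u
      = (PiTensorProduct.reindex F (fun _ : Fin n => H) (Equiv.refl (Fin n))) u := rfl
    _ = u := by rw [h]; rfl

lemma wb_sum_mul_right {M : Type*} [AddCommMonoid M] {n : ℕ} {a : Finset (Fin n)}
    {h : Equiv.Perm (Fin n)} (hh : h ∈ permsOn n a) (f : Equiv.Perm (Fin n) → M) :
    ∑ σ ∈ permsOn n a, f (σ * h) = ∑ σ ∈ permsOn n a, f σ := by
  apply Finset.sum_nbij' (i := fun σ => σ * h) (j := fun σ => σ * h⁻¹)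
  · intro σ hσ; exact wb_mul_mem hσ hh
  · intro σ hσ; exact wb_mul_mem hσ (wb_inv_mem hh)
  · intro σ _; group
  · intro σ _; group
  · intro σ _; rfl

lemma wb_sum_mul_left {M : Type*} [AddCommMonoid M] {n : ℕ} {a : Finset (Fin n)}
    {h : Equiv.Perm (Fin n)} (hh : h ∈ permsOn n a) (f : Equiv.Perm (Fin n) → M) :
    ∑ σ ∈ permsOn n a, f (h * σ) = ∑ σ ∈ permsOn n a, f σ := by
  apply Finset.sum_nbij' (i := fun σ => h * σ) (j := fun σ => h⁻¹ * σ)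
  · intro σ hσ; exact wb_mul_mem hh hσ
  · intro σ hσ; exact wb_mul_mem (wb_inv_mem hh) hσ
  · intro σ _; group
  · intro σ _; group
  · intro σ _; rfl

lemma wb_permMap_symOn {n : ℕ} {a : Finset (Fin n)} {σ : Equiv.Perm (Fin n)}
    (hσ : σ ∈ permsOn n a) (u : TP F H n) :
    permMap F H n σ (symOn F H n a u) = symOn F H n a u := by
  rw [wb_symOn_apply F H a u, map_smul, map_sum]
  congr 1
  simp_rw [wb_permMap_permMap]
  exact wb_sum_mul_left hσ (fun τ => permMap F H n τ u)

lemma wb_permMap_altOn {n : ℕ} {a : Finset (Fin n)} {σ : Equiv.Perm (Fin n)}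
    (hσ : σ ∈ permsOn n a) (u : TP F H n) :
    permMap F H n σ (altOn F H n a u) = sgnF F σ • altOn F H n a u := by
  rw [wb_altOn_apply F H a u, map_smul, map_sum, smul_comm (sgnF F σ)]
  congr 1
  calc ∑ τ ∈ permsOn n a, permMap F H n σ (sgnF F τ • permMap F H n τ u)
      = ∑ τ ∈ permsOn n a, sgnF F σ • (sgnF F (σ * τ) • permMap F H n (σ * τ) u) := by
        refine Finset.sum_congr rfl fun τ _ => ?_
        rw [map_smul, wb_permMap_permMap, sgnF_mul, smul_smul, ← mul_assoc,
          sgnF_mul_self, one_mul]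
    _ = sgnF F σ • ∑ τ ∈ permsOn n a, sgnF F (σ * τ) • permMap F H n (σ * τ) u := by
        rw [Finset.smul_sum]
    _ = sgnF F σ • ∑ τ ∈ permsOn n a, sgnF F τ • permMap F H n τ u := by
        rw [wb_sum_mul_left hσ (fun ρ => sgnF F ρ • permMap F H n ρ u)]

lemma wb_symOn_permMap {n : ℕ} {a : Finset (Fin n)} {σ : Equiv.Perm (Fin n)}
    (hσ : σ ∈ permsOn n a) (u : TP F H n) :
    symOn F H n a (permMap F H n σ u) = symOn F H n a u := by
  rw [wb_symOn_apply F H a (permMap F H n σ u), wb_symOn_apply F H a u]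
  congr 1
  simp_rw [wb_permMap_permMap]
  exact wb_sum_mul_right hσ (fun τ => permMap F H n τ u)

lemma wb_altOn_permMap {n : ℕ} {a : Finset (Fin n)} {σ : Equiv.Perm (Fin n)}
    (hσ : σ ∈ permsOn n a) (u : TP F H n) :
    altOn F H n a (permMap F H n σ u) = sgnF F σ • altOn F H n a u := by
  rw [wb_altOn_apply F H a (permMap F H n σ u), wb_altOn_apply F H a u,
    smul_comm (sgnF F σ)]
  congr 1
  calc ∑ τ ∈ permsOn n a, sgnF F τ • permMap F H n τ (permMap F H n σ u)
      = ∑ τ ∈ permsOn n a, sgnF F (τ * σ) • sgnF F σ • permMap F H n (τ * σ) u := by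
        refine Finset.sum_congr rfl fun τ _ => ?_
        rw [wb_permMap_permMap, sgnF_mul, smul_smul, mul_assoc, sgnF_mul_self, mul_one]
    _ = ∑ τ ∈ permsOn n a, sgnF F τ • sgnF F σ • permMap F H n τ u :=
        wb_sum_mul_right hσ (fun ρ => sgnF F ρ • sgnF F σ • permMap F H n ρ u)
    _ = sgnF F σ • ∑ τ ∈ permsOn n a, sgnF F τ • permMap F H n τ u := by
        rw [Finset.smul_sum]
        refine Finset.sum_congr rfl fun τ _ => ?_
        rw [smul_comm]

lemma wb_factorial_ne {m : ℕ} : ((m.factorial : F)) ≠ 0 :=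
  Nat.cast_ne_zero.mpr (Nat.factorial_ne_zero m)

lemma wb_symOn_symOn {n : ℕ} {a b : Finset (Fin n)} (hba : b ⊆ a) (u : TP F H n) :
    symOn F H n b (symOn F H n a u) = symOn F H n a u := by
  rw [wb_symOn_apply F H b (symOn F H n a u)]
  have hc : ∀ σ ∈ permsOn n b, permMap F H n σ (symOn F H n a u) = symOn F H n a u :=
    fun σ hσ => wb_permMap_symOn F H (wb_mono hba hσ) u
  rw [Finset.sum_congr rfl hc, Finset.sum_const, wb_card_permsOn,
    ← Nat.cast_smul_eq_nsmul F, smul_smul, inv_mul_cancel₀ (wb_factorial_ne F), one_smul]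

lemma wb_altOn_altOn {n : ℕ} {a b : Finset (Fin n)} (hba : b ⊆ a) (u : TP F H n) :
    altOn F H n b (altOn F H n a u) = altOn F H n a u := by
  rw [wb_altOn_apply F H b (altOn F H n a u)]
  have hc : ∀ σ ∈ permsOn n b, sgnF F σ • permMap F H n σ (altOn F H n a u)
      = altOn F H n a u := fun σ hσ => by
    rw [wb_permMap_altOn F H (wb_mono hba hσ) u, smul_smul, sgnF_mul_self, one_smul]
  rw [Finset.sum_congr rfl hc, Finset.sum_const, wb_card_permsOn,
    ← Nat.cast_smul_eq_nsmul F, smul_smul, inv_mul_cancel₀ (wb_factorial_ne F), one_smul]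

lemma wb_symOn_symOn' {n : ℕ} {a b : Finset (Fin n)} (hba : b ⊆ a) (u : TP F H n) :
    symOn F H n a (symOn F H n b u) = symOn F H n a u := by
  rw [wb_symOn_apply F H b u, map_smul, map_sum]
  have hc : ∀ σ ∈ permsOn n b, symOn F H n a (permMap F H n σ u) = symOn F H n a u :=
    fun σ hσ => wb_symOn_permMap F H (wb_mono hba hσ) u
  rw [Finset.sum_congr rfl hc, Finset.sum_const, wb_card_permsOn,
    ← Nat.cast_smul_eq_nsmul F, smul_smul, inv_mul_cancel₀ (wb_factorial_ne F), one_smul]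

lemma wb_altOn_altOn' {n : ℕ} {a b : Finset (Fin n)} (hba : b ⊆ a) (u : TP F H n) :
    altOn F H n a (altOn F H n b u) = altOn F H n a u := by
  rw [wb_altOn_apply F H b u, map_smul, map_sum]
  have hc : ∀ σ ∈ permsOn n b, altOn F H n a (sgnF F σ • permMap F H n σ u)
      = altOn F H n a u := fun σ hσ => by
    rw [map_smul, wb_altOn_permMap F H (wb_mono hba hσ) u, smul_smul, sgnF_mul_self, one_smul]
  rw [Finset.sum_congr rfl hc, Finset.sum_const, wb_card_permsOn,
    ← Nat.cast_smul_eq_nsmul F, smul_smul, inv_mul_cancel₀ (wb_factorial_ne F), one_smul]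

lemma wb_commute {n : ℕ} {b : Finset (Fin n)} {σ h : Equiv.Perm (Fin n)}
    (hfix : ∀ i ∈ b, σ i = i) (hh : h ∈ permsOn n b) : σ * h = h * σ := by
  have hd : Equiv.Perm.Disjoint σ h := by
    intro x
    by_cases hx : x ∈ b
    · exact Or.inl (hfix x hx)
    · exact Or.inr (wb_mem_permsOn.mp hh x hx)
  exact hd.commute

lemma wb_permMap_symOn_comm {n : ℕ} {b : Finset (Fin n)} {σ : Equiv.Perm (Fin n)}
    (hfix : ∀ i ∈ b, σ i = i) (u : TP F H n) :
    permMap F H n σ (symOn F H n b u) = symOn F H n b (permMap F H n σ u) := by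
  rw [wb_symOn_apply F H b u, wb_symOn_apply F H b (permMap F H n σ u), map_smul, map_sum]
  congr 1
  refine Finset.sum_congr rfl fun h hh => ?_
  rw [wb_permMap_permMap, wb_permMap_permMap, wb_commute hfix hh]

lemma wb_permMap_altOn_comm {n : ℕ} {b : Finset (Fin n)} {σ : Equiv.Perm (Fin n)}
    (hfix : ∀ i ∈ b, σ i = i) (u : TP F H n) :
    permMap F H n σ (altOn F H n b u) = altOn F H n b (permMap F H n σ u) := by
  rw [wb_altOn_apply F H b u, wb_altOn_apply F H b (permMap F H n σ u), map_smul, map_sum]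
  congr 1
  refine Finset.sum_congr rfl fun h hh => ?_
  rw [map_smul, wb_permMap_permMap, wb_permMap_permMap, wb_commute hfix hh]

lemma wb_symOn_altOn_comm {n : ℕ} {a b : Finset (Fin n)}
    (hd : ∀ i ∈ b, i ∉ a) (u : TP F H n) :
    symOn F H n a (altOn F H n b u) = altOn F H n b (symOn F H n a u) := by
  rw [wb_symOn_apply F H a (altOn F H n b u), wb_symOn_apply F H a u, map_smul, map_sum]
  congr 1
  refine Finset.sum_congr rfl fun h hh => ?_
  exact wb_permMap_altOn_comm F H (fun i hi => wb_mem_permsOn.mp hh i (hd i hi)) u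


lemma wb_sum_permsOn_pivot {M : Type*} [AddCommMonoid M] {n : ℕ} {a : Finset (Fin n)}
    {p : Fin n} (hp : p ∈ a) (f : Equiv.Perm (Fin n) → M) :
    ∑ σ ∈ permsOn n a, f σ
      = ∑ j ∈ a, ∑ h ∈ permsOn n (a.erase p), f (Equiv.swap p j * h) := by
  rw [← Finset.sum_product' (s := a) (t := permsOn n (a.erase p))
      (f := fun j h => f (Equiv.swap p j * h))]
  apply Finset.sum_nbij' (i := fun σ => (σ p, Equiv.swap p (σ p) * σ))
    (j := fun x => Equiv.swap p x.1 * x.2)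
  · intro σ hσ
    refine Finset.mem_product.mpr ⟨wb_apply_mem hσ hp, ?_⟩
    rw [wb_mem_permsOn]
    intro i hi
    rcases eq_or_ne i p with rfl | hip
    · simp [Equiv.Perm.mul_apply]
    · have hia : i ∉ a := fun hia => hi (Finset.mem_erase.mpr ⟨hip, hia⟩)
      have hσi : σ i = i := wb_mem_permsOn.mp hσ i hia
      have hne2 : i ≠ σ p := by
        intro hisp
        have : σ i = σ p := by rw [hσi, hisp]
        exact hip (σ.injective this)
      simp [Equiv.Perm.mul_apply, hσi, Equiv.swap_apply_of_ne_of_ne hip hne2]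
  · intro x hx
    obtain ⟨hx1, hx2⟩ := Finset.mem_product.mp hx
    exact wb_mul_mem (wb_swap_mem hp hx1) (wb_mono (Finset.erase_subset p a) hx2)
  · intro σ _
    simp only
    rw [← mul_assoc, Equiv.swap_mul_self, one_mul]
  · intro x hx
    obtain ⟨hx1, hx2⟩ := Finset.mem_product.mp hx
    have hp2 : x.2 p = p := wb_mem_permsOn.mp hx2 p (Finset.notMem_erase p a)
    have happ : (Equiv.swap p x.1 * x.2) p = x.1 := by
      simp [Equiv.Perm.mul_apply, hp2]
    simp only [happ]
    ext1
    · simp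
    · simp only
      rw [← mul_assoc, Equiv.swap_mul_self, one_mul]
  · intro σ _
    simp only
    rw [← mul_assoc, Equiv.swap_mul_self, one_mul]

lemma wb_smul_symOn {n : ℕ} {a : Finset (Fin n)} {p : Fin n} (hp : p ∈ a) (u : TP F H n) :
    (a.card : F) • symOn F H n a u
      = ∑ j ∈ a, permMap F H n (Equiv.swap p j) (symOn F H n (a.erase p) u) := by
  rw [wb_symOn_apply F H a u, wb_sum_permsOn_pivot hp (f := fun σ => permMap F H n σ u)]
  have hsum : ∑ h ∈ permsOn n (a.erase p), permMap F H n h u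
      = (((a.erase p).card.factorial : F)) • symOn F H n (a.erase p) u := by
    rw [wb_symOn_apply, smul_smul, mul_inv_cancel₀ (wb_factorial_ne F), one_smul]
  simp_rw [← wb_permMap_permMap, ← map_sum, hsum, map_smul]
  rw [← Finset.smul_sum, smul_smul, smul_smul]
  have h0 : 0 < a.card := Finset.card_pos.mpr ⟨p, hp⟩
  have hfac : a.card * (a.card - 1).factorial = a.card.factorial := Nat.mul_factorial_pred h0.ne'
  have hfacF : (a.card : F) * (((a.card - 1).factorial : ℕ) : F) = ((a.card.factorial : ℕ) : F) := by
    exact_mod_cast congrArg (Nat.cast : ℕ → F) hfac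
  have hone : (a.card : F) * ((a.card.factorial : F))⁻¹ * (((a.erase p).card.factorial : F)) = 1 := by
    rw [Finset.card_erase_of_mem hp, mul_right_comm, hfacF,
      mul_inv_cancel₀ (wb_factorial_ne F)]
  rw [hone, one_smul]

lemma wb_smul_altOn {n : ℕ} {a : Finset (Fin n)} {p : Fin n} (hp : p ∈ a) (u : TP F H n) :
    (a.card : F) • altOn F H n a u
      = ∑ j ∈ a, sgnF F (Equiv.swap p j) •
          permMap F H n (Equiv.swap p j) (altOn F H n (a.erase p) u) := by
  rw [wb_altOn_apply F H a u, wb_sum_permsOn_pivot hp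
    (f := fun σ => sgnF F σ • permMap F H n σ u)]
  have hsum : ∑ h ∈ permsOn n (a.erase p), sgnF F h • permMap F H n h u
      = (((a.erase p).card.factorial : F)) • altOn F H n (a.erase p) u := by
    rw [wb_altOn_apply, smul_smul, mul_inv_cancel₀ (wb_factorial_ne F), one_smul]
  have inner : ∀ j ∈ a,
      ∑ h ∈ permsOn n (a.erase p), sgnF F (Equiv.swap p j * h) •
          permMap F H n (Equiv.swap p j * h) u
        = (((a.erase p).card.factorial : F)) • (sgnF F (Equiv.swap p j) •
            permMap F H n (Equiv.swap p j) (altOn F H n (a.erase p) u)) := by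
    intro j _
    calc ∑ h ∈ permsOn n (a.erase p), sgnF F (Equiv.swap p j * h) •
            permMap F H n (Equiv.swap p j * h) u
        = sgnF F (Equiv.swap p j) • permMap F H n (Equiv.swap p j)
            (∑ h ∈ permsOn n (a.erase p), sgnF F h • permMap F H n h u) := by
          rw [map_sum, Finset.smul_sum]
          refine Finset.sum_congr rfl fun h _ => ?_
          rw [map_smul, wb_permMap_permMap, smul_smul, ← sgnF_mul]
      _ = sgnF F (Equiv.swap p j) • permMap F H n (Equiv.swap p j)
            ((((a.erase p).card.factorial : F)) • altOn F H n (a.erase p) u) := by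
          rw [hsum]
      _ = (((a.erase p).card.factorial : F)) • (sgnF F (Equiv.swap p j) •
            permMap F H n (Equiv.swap p j) (altOn F H n (a.erase p) u)) := by
          rw [map_smul, smul_comm]
  rw [Finset.sum_congr rfl inner, ← Finset.smul_sum, smul_smul, smul_smul]
  have h0 : 0 < a.card := Finset.card_pos.mpr ⟨p, hp⟩
  have hfac : a.card * (a.card - 1).factorial = a.card.factorial := Nat.mul_factorial_pred h0.ne'
  have hfacF : (a.card : F) * (((a.card - 1).factorial : ℕ) : F) = ((a.card.factorial : ℕ) : F) := by
    exact_mod_cast congrArg (Nat.cast : ℕ → F) hfac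
  have hone : (a.card : F) * ((a.card.factorial : F))⁻¹ * (((a.erase p).card.factorial : F)) = 1 := by
    rw [Finset.card_erase_of_mem hp, mul_right_comm, hfacF,
      mul_inv_cancel₀ (wb_factorial_ne F)]
  rw [hone, one_smul]

lemma wb_card_firstSet {n m : ℕ} (hmn : m ≤ n) : (Finset.univ.filter
    (fun i : Fin n => (i : ℕ) < m)).card = m := by
  have heq : Finset.univ.filter (fun i : Fin n => (i : ℕ) < m)
      = (Finset.range m).attachFin
        (fun i hi => lt_of_lt_of_le (Finset.mem_range.mp hi) hmn) := by
    ext i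
    simp [Finset.mem_attachFin]
  rw [heq, Finset.card_attachFin, Finset.card_range]

lemma wb_swap_identity {α : Type*} [DecidableEq α] {p₁ p₂ i j : α}
    (h1 : p₁ ≠ p₂) (h2 : p₁ ≠ j) (h3 : i ≠ p₂) (h4 : i ≠ j) :
    Equiv.swap p₁ i * Equiv.swap p₁ j
      = Equiv.swap p₂ j * Equiv.swap p₂ i * (Equiv.swap p₁ i * Equiv.swap p₂ j) := by
  have hA : Equiv.swap p₂ j p₂ = j := Equiv.swap_apply_left _ _
  have hAi : Equiv.swap p₂ j i = i := Equiv.swap_apply_of_ne_of_ne h3 h4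
  have hAp1 : Equiv.swap p₂ j p₁ = p₁ := Equiv.swap_apply_of_ne_of_ne h1 h2
  have hBj : Equiv.swap p₁ i j = j := Equiv.swap_apply_of_ne_of_ne (Ne.symm h2) (Ne.symm h4)
  have hBi : Equiv.swap p₁ i i = p₁ := Equiv.swap_apply_right _ _
  have e1 : Equiv.swap p₂ j * Equiv.swap p₂ i * (Equiv.swap p₂ j)⁻¹ = Equiv.swap j i := by
    rw [← Equiv.swap_apply_apply, hA, hAi]
  have e2 : Equiv.swap p₂ j * Equiv.swap p₁ i * (Equiv.swap p₂ j)⁻¹ = Equiv.swap p₁ i := by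
    rw [← Equiv.swap_apply_apply, hAp1, hAi]
  have e3 : Equiv.swap p₁ i * Equiv.swap j i * (Equiv.swap p₁ i)⁻¹ = Equiv.swap j p₁ := by
    rw [← Equiv.swap_apply_apply, hBj, hBi]
  calc Equiv.swap p₁ i * Equiv.swap p₁ j
      = Equiv.swap p₁ i * Equiv.swap j p₁ := by rw [Equiv.swap_comm j p₁]
    _ = Equiv.swap p₁ i * (Equiv.swap p₁ i * Equiv.swap j i * (Equiv.swap p₁ i)⁻¹) := by
        rw [e3]
    _ = Equiv.swap j i * Equiv.swap p₁ i := by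
        rw [Equiv.swap_inv]
        simp only [mul_assoc, Equiv.swap_mul_self_mul]
    _ = (Equiv.swap p₂ j * Equiv.swap p₂ i * (Equiv.swap p₂ j)⁻¹) *
          (Equiv.swap p₂ j * Equiv.swap p₁ i * (Equiv.swap p₂ j)⁻¹) := by
        rw [e1, e2]
    _ = Equiv.swap p₂ j * Equiv.swap p₂ i * (Equiv.swap p₁ i * Equiv.swap p₂ j) := by
        rw [Equiv.swap_inv]
        simp only [mul_assoc, Equiv.swap_mul_self_mul]


lemma wb_card_lastSet {n m : ℕ} (hmn : m ≤ n) : (Finset.univ.filter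
    (fun i : Fin n => n - m ≤ (i : ℕ))).card = m := by
  have hcompl : Finset.univ.filter (fun i : Fin n => n - m ≤ (i : ℕ))
      = (Finset.univ.filter (fun i : Fin n => (i : ℕ) < n - m))ᶜ := by
    ext i
    simp only [Finset.mem_filter, Finset.mem_univ, true_and, Finset.mem_compl, not_lt]
  rw [hcompl, Finset.card_compl, wb_card_firstSet (Nat.sub_le n m), Fintype.card_fin]
  omega


/-- Weitzenböck-type identity: For all natural numbers `k ≥ 1` and `q ≥ 1`
with `n = k + q`, the identity `d̆*_q ∘ d̆_q + d̆_{q-1} ∘ d̆*_{q-1} = (k+q)·id`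
holds on `H_{k,q}`. -/
theorem weitzenbock (k q : ℕ) (hk : 1 ≤ k) (hq : 1 ≤ q) :
    ∀ v ∈ Hmix F H (k + q) k,
      dStarOp F H (k + q) k (dOp F H (k + q) (q + 1) v) +
        dOp F H (k + q) q (dStarOp F H (k + q) (k + 1) v) = ((k + q : ℕ) : F) • v := by
  intro v hv
  obtain ⟨w, hw⟩ := hv
  obtain ⟨p₁, hp₁val⟩ : ∃ p : Fin (k+q), (p : ℕ) = k - 1 := ⟨⟨k-1, by omega⟩, rfl⟩
  obtain ⟨p₂, hp₂val⟩ : ∃ p : Fin (k+q), (p : ℕ) = k := ⟨⟨k, by omega⟩, rfl⟩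
  -- set facts
  have hcompl : (firstSet (k+q) k)ᶜ = lastSet (k+q) q := by
    ext i; simp only [firstSet, lastSet, Finset.mem_compl, Finset.mem_filter,
      Finset.mem_univ, true_and, not_lt]; omega
  have hLq1_erase : (lastSet (k+q) (q+1)).erase p₁ = lastSet (k+q) q := by
    ext i; simp only [lastSet, Finset.mem_erase, Finset.mem_filter, Finset.mem_univ,
      true_and, Ne, Fin.ext_iff, hp₁val]; omega
  have hFk1_erase : (firstSet (k+q) (k+1)).erase p₂ = firstSet (k+q) k := by
    ext i; simp only [firstSet, Finset.mem_erase, Finset.mem_filter, Finset.mem_univ,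
      true_and, Ne, Fin.ext_iff, hp₂val]; omega
  have hFk_erase : (firstSet (k+q) k).erase p₁ = firstSet (k+q) (k-1) := by
    ext i; simp only [firstSet, Finset.mem_erase, Finset.mem_filter, Finset.mem_univ,
      true_and, Ne, Fin.ext_iff, hp₁val]; omega
  have hLq_erase : (lastSet (k+q) q).erase p₂ = lastSet (k+q) (q-1) := by
    ext i; simp only [lastSet, Finset.mem_erase, Finset.mem_filter, Finset.mem_univ,
      true_and, Ne, Fin.ext_iff, hp₂val]; omega
  have hp₁L : p₁ ∈ lastSet (k+q) (q+1) := by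
    simp only [lastSet, Finset.mem_filter, Finset.mem_univ, true_and, hp₁val]; omega
  have hp₁F : p₁ ∈ firstSet (k+q) k := by
    simp only [firstSet, Finset.mem_filter, Finset.mem_univ, true_and, hp₁val]; omega
  have hp₂F : p₂ ∈ firstSet (k+q) (k+1) := by
    simp only [firstSet, Finset.mem_filter, Finset.mem_univ, true_and, hp₂val]; omega
  have hp₂L : p₂ ∈ lastSet (k+q) q := by
    simp only [lastSet, Finset.mem_filter, Finset.mem_univ, true_and, hp₂val]; omega
  have hcF : (firstSet (k+q) k).card = k := by
    simp only [firstSet]; exact wb_card_firstSet (by omega)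
  have hcF1 : (firstSet (k+q) (k+1)).card = k+1 := by
    simp only [firstSet]; exact wb_card_firstSet (by omega)
  have hcL : (lastSet (k+q) q).card = q := by
    simp only [lastSet]; exact wb_card_lastSet (by omega)
  have hcL1 : (lastSet (k+q) (q+1)).card = q+1 := by
    simp only [lastSet]; exact wb_card_lastSet (by omega)
  have hdisj : ∀ i ∈ lastSet (k+q) q, i ∉ firstSet (k+q) k := by
    intro i hi
    simp only [lastSet, firstSet, Finset.mem_filter, Finset.mem_univ, true_and,
      not_lt] at *
    omega
  -- invariance facts
  have hvPQ : v = symOn F H (k+q) (firstSet (k+q) k)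
      (altOn F H (k+q) (lastSet (k+q) q) w) := by
    rw [← hw]
    simp only [Hmix, Hgen, LinearMap.comp_apply, hcompl]
  have hPv : symOn F H (k+q) (firstSet (k+q) k) v = v := by
    conv_lhs => rw [hvPQ]
    rw [wb_symOn_symOn F H (subset_refl _), ← hvPQ]
  have hQv : altOn F H (k+q) (lastSet (k+q) q) v = v := by
    conv_lhs => rw [hvPQ]
    rw [wb_symOn_altOn_comm F H hdisj, wb_altOn_altOn F H (subset_refl _),
      ← wb_symOn_altOn_comm F H hdisj, ← hvPQ]
  have hP'v : symOn F H (k+q) (firstSet (k+q) (k-1)) v = v := by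
    conv_lhs => rw [← hPv]
    have hsub : firstSet (k+q) (k-1) ⊆ firstSet (k+q) k := by
      intro i hi
      simp only [firstSet, Finset.mem_filter, Finset.mem_univ, true_and] at *
      omega
    rw [wb_symOn_symOn F H hsub, hPv]
  have hQ''v : altOn F H (k+q) (lastSet (k+q) (q-1)) v = v := by
    conv_lhs => rw [← hQv]
    have hsub : lastSet (k+q) (q-1) ⊆ lastSet (k+q) q := by
      intro i hi
      simp only [lastSet, Finset.mem_filter, Finset.mem_univ, true_and] at *
      omega
    rw [wb_altOn_altOn F H hsub, hQv]
  have hpermP : ∀ σ ∈ permsOn (k+q) (firstSet (k+q) k), permMap F H (k+q) σ v = v := by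
    intro σ hσ
    conv_lhs => rw [← hPv]
    rw [wb_permMap_symOn F H hσ, hPv]
  have hpermQ : ∀ σ ∈ permsOn (k+q) (lastSet (k+q) q),
      permMap F H (k+q) σ v = sgnF F σ • v := by
    intro σ hσ
    conv_lhs => rw [← hQv]
    rw [wb_permMap_altOn F H hσ, hQv]
  -- expansion of the first composite
  have hstep1 : ((q+1 : ℕ) : F) • altOn F H (k+q) (lastSet (k+q) (q+1)) v
      = ∑ j ∈ lastSet (k+q) (q+1), sgnF F (Equiv.swap p₁ j) •
          permMap F H (k+q) (Equiv.swap p₁ j) v := by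
    have h := wb_smul_altOn F H hp₁L v
    rw [hcL1, hLq1_erase, hQv] at h
    exact h
  have hE1 : dStarOp F H (k+q) k (dOp F H (k+q) (q+1) v)
      = ∑ j ∈ lastSet (k+q) (q+1), sgnF F (Equiv.swap p₁ j) •
          ∑ i ∈ firstSet (k+q) k, permMap F H (k+q) (Equiv.swap p₁ i)
            (permMap F H (k+q) (Equiv.swap p₁ j) v) := by
    simp only [dOp, dStarOp, LinearMap.smul_apply]
    rw [hstep1, map_sum, Finset.smul_sum]
    refine Finset.sum_congr rfl fun j hj => ?_
    rw [map_smul, smul_comm]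
    congr 1
    have h2 := wb_smul_symOn F H hp₁F (permMap F H (k+q) (Equiv.swap p₁ j) v)
    rw [hcF, hFk_erase] at h2
    have hfix : ∀ x ∈ firstSet (k+q) (k-1), Equiv.swap p₁ j x = x := by
      intro x hx
      have hx' : (x : ℕ) < k - 1 := by
        simpa only [firstSet, Finset.mem_filter, Finset.mem_univ, true_and] using hx
      have hj' : k + q - (q+1) ≤ (j : ℕ) := by
        simpa only [lastSet, Finset.mem_filter, Finset.mem_univ, true_and] using hj
      exact Equiv.swap_apply_of_ne_of_ne
        (Fin.ne_of_val_ne (by omega)) (Fin.ne_of_val_ne (by omega))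
    have harg : symOn F H (k+q) (firstSet (k+q) (k-1))
        (permMap F H (k+q) (Equiv.swap p₁ j) v)
        = permMap F H (k+q) (Equiv.swap p₁ j) v := by
      rw [← wb_permMap_symOn_comm F H hfix, hP'v]
    rw [h2, Finset.sum_congr rfl fun i _ => by rw [harg]]
  -- expansion of the second composite
  have hstep2 : ((k+1 : ℕ) : F) • symOn F H (k+q) (firstSet (k+q) (k+1)) v
      = ∑ i ∈ firstSet (k+q) (k+1), permMap F H (k+q) (Equiv.swap p₂ i) v := by
    have h := wb_smul_symOn F H hp₂F v
    rw [hcF1, hFk1_erase, hPv] at h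
    exact h
  have hE2 : dOp F H (k+q) q (dStarOp F H (k+q) (k+1) v)
      = ∑ i ∈ firstSet (k+q) (k+1), ∑ j ∈ lastSet (k+q) q,
          sgnF F (Equiv.swap p₂ j) • permMap F H (k+q) (Equiv.swap p₂ j)
            (permMap F H (k+q) (Equiv.swap p₂ i) v) := by
    simp only [dOp, dStarOp, LinearMap.smul_apply]
    rw [hstep2, map_sum, Finset.smul_sum]
    refine Finset.sum_congr rfl fun i hi => ?_
    have hfix : ∀ x ∈ lastSet (k+q) (q-1), Equiv.swap p₂ i x = x := by
      intro x hx
      have hx' : k + q - (q-1) ≤ (x : ℕ) := by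
        simpa only [lastSet, Finset.mem_filter, Finset.mem_univ, true_and] using hx
      have hi' : (i : ℕ) < k + 1 := by
        simpa only [firstSet, Finset.mem_filter, Finset.mem_univ, true_and] using hi
      exact Equiv.swap_apply_of_ne_of_ne
        (Fin.ne_of_val_ne (by omega)) (Fin.ne_of_val_ne (by omega))
    have harg : altOn F H (k+q) (lastSet (k+q) (q-1))
        (permMap F H (k+q) (Equiv.swap p₂ i) v)
        = permMap F H (k+q) (Equiv.swap p₂ i) v := by
      rw [← wb_permMap_altOn_comm F H hfix, hQ''v]
    have h2 := wb_smul_altOn F H hp₂L (permMap F H (k+q) (Equiv.swap p₂ i) v)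
    rw [hcL, hLq_erase, harg] at h2
    exact h2
  -- splitting off the pivots
  have hsplit1 : lastSet (k+q) (q+1) = insert p₁ (lastSet (k+q) q) := by
    ext i; simp only [lastSet, Finset.mem_insert, Finset.mem_filter, Finset.mem_univ,
      true_and, Fin.ext_iff, hp₁val]; omega
  have hsplit2 : firstSet (k+q) (k+1) = insert p₂ (firstSet (k+q) k) := by
    ext i; simp only [firstSet, Finset.mem_insert, Finset.mem_filter, Finset.mem_univ,
      true_and, Fin.ext_iff, hp₂val]; omega
  have hp₁notin : p₁ ∉ lastSet (k+q) q := by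
    simp only [lastSet, Finset.mem_filter, Finset.mem_univ, true_and, hp₁val, not_le]
    omega
  have hp₂notin : p₂ ∉ firstSet (k+q) k := by
    simp only [firstSet, Finset.mem_filter, Finset.mem_univ, true_and, hp₂val, not_lt]
    exact le_rfl
  have hswap1 : Equiv.swap p₁ p₁ = 1 := by rw [Equiv.swap_self]; rfl
  have hswap2 : Equiv.swap p₂ p₂ = 1 := by rw [Equiv.swap_self]; rfl
  have hdiag1 : sgnF F (Equiv.swap p₁ p₁) •
      ∑ i ∈ firstSet (k+q) k, permMap F H (k+q) (Equiv.swap p₁ i)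
        (permMap F H (k+q) (Equiv.swap p₁ p₁) v) = (k : F) • v := by
    rw [hswap1, sgnF_one, one_smul]
    have hterm : ∀ i ∈ firstSet (k+q) k,
        permMap F H (k+q) (Equiv.swap p₁ i) (permMap F H (k+q) 1 v) = v := by
      intro i hi
      rw [wb_permMap_one, hpermP _ (wb_swap_mem hp₁F hi)]
    rw [Finset.sum_congr rfl hterm, Finset.sum_const, hcF, ← Nat.cast_smul_eq_nsmul F]
  have hdiag2 : ∑ j ∈ lastSet (k+q) q, sgnF F (Equiv.swap p₂ j) •
      permMap F H (k+q) (Equiv.swap p₂ j)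
        (permMap F H (k+q) (Equiv.swap p₂ p₂) v) = (q : F) • v := by
    have hterm : ∀ j ∈ lastSet (k+q) q, sgnF F (Equiv.swap p₂ j) •
        permMap F H (k+q) (Equiv.swap p₂ j)
          (permMap F H (k+q) (Equiv.swap p₂ p₂) v) = v := by
      intro j hj
      rw [hswap2, wb_permMap_one, hpermQ _ (wb_swap_mem hp₂L hj), smul_smul,
        sgnF_mul_self, one_smul]
    rw [Finset.sum_congr rfl hterm, Finset.sum_const, hcL, ← Nat.cast_smul_eq_nsmul F]
  -- cancellation of the cross terms
  have hcancel : ∀ j ∈ lastSet (k+q) q, ∀ i ∈ firstSet (k+q) k,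
      sgnF F (Equiv.swap p₁ j) • permMap F H (k+q) (Equiv.swap p₁ i)
          (permMap F H (k+q) (Equiv.swap p₁ j) v)
        + sgnF F (Equiv.swap p₂ j) • permMap F H (k+q) (Equiv.swap p₂ j)
            (permMap F H (k+q) (Equiv.swap p₂ i) v) = 0 := by
    intro j hj i hi
    have hj' : k + q - q ≤ (j : ℕ) := by
      simpa only [lastSet, Finset.mem_filter, Finset.mem_univ, true_and] using hj
    have hi' : (i : ℕ) < k := by
      simpa only [firstSet, Finset.mem_filter, Finset.mem_univ, true_and] using hi
    have h1 : p₁ ≠ p₂ := Fin.ne_of_val_ne (by omega)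
    have h2 : p₁ ≠ j := Fin.ne_of_val_ne (by omega)
    have h3 : i ≠ p₂ := Fin.ne_of_val_ne (by omega)
    have h4 : i ≠ j := Fin.ne_of_val_ne (by omega)
    have hin : permMap F H (k+q) (Equiv.swap p₁ i * Equiv.swap p₂ j) v
        = sgnF F (Equiv.swap p₂ j) • v := by
      rw [← wb_permMap_permMap, hpermQ _ (wb_swap_mem hp₂L hj), map_smul,
        hpermP _ (wb_swap_mem hp₁F hi)]
    have hkey : permMap F H (k+q) (Equiv.swap p₁ i)
        (permMap F H (k+q) (Equiv.swap p₁ j) v)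
        = sgnF F (Equiv.swap p₂ j) • permMap F H (k+q) (Equiv.swap p₂ j)
            (permMap F H (k+q) (Equiv.swap p₂ i) v) := by
      rw [wb_permMap_permMap, wb_swap_identity h1 h2 h3 h4, ← wb_permMap_permMap,
        ← wb_permMap_permMap, hin, map_smul, map_smul]
    have hsgn : sgnF F (Equiv.swap p₁ j) = -1 := by
      rw [sgnF, Equiv.Perm.sign_swap h2]
      norm_num
    rw [hkey, hsgn, smul_smul, neg_one_mul, neg_smul, neg_add_cancel]
  -- put everything together
  rw [hE1, hE2, hsplit1, Finset.sum_insert hp₁notin, hsplit2, Finset.sum_insert hp₂notin,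
    hdiag1, hdiag2, add_add_add_comm]
  have hS : (∑ j ∈ lastSet (k+q) q, sgnF F (Equiv.swap p₁ j) •
        ∑ i ∈ firstSet (k+q) k, permMap F H (k+q) (Equiv.swap p₁ i)
          (permMap F H (k+q) (Equiv.swap p₁ j) v))
      + ∑ i ∈ firstSet (k+q) k, ∑ j ∈ lastSet (k+q) q,
          sgnF F (Equiv.swap p₂ j) • permMap F H (k+q) (Equiv.swap p₂ j)
            (permMap F H (k+q) (Equiv.swap p₂ i) v) = 0 := by
    rw [Finset.sum_comm]
    simp_rw [Finset.smul_sum]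
    rw [← Finset.sum_add_distrib]
    refine Finset.sum_eq_zero fun j hj => ?_
    rw [← Finset.sum_add_distrib]
    exact Finset.sum_eq_zero fun i hi => hcancel j hj i hi
  rw [hS, add_zero, ← add_smul]
  congr 1
  push_cast
  ring

end
end

section
/- (Rawnsley; exactness of the d̆-sequence) Fix n and for 0 ≤ q ≤ n write H_{n−q,q} for the corresponding subspace of H^{⊗n}. The sequence 0 → H^{⊙n} = H_{n,0} →^{d̆_0} H_{n−1,1} →^{d̆_1} ⋯ →^{d̆_{n−1}} H_{0,n} = H^{∧n} → 0 is exact: d̆_0 is injective, d̆_{n−1} is surjective, and for every 1 ≤ q ≤ n−1, ker(d̆_q : H_{n−q,q} → H_{n−q−1,q+1}) = im(d̆_{q−1} : H_{n−q+1,q−1} → H_{n−q,q}). -/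
open scoped BigOperators

noncomputable section

variable (F : Type*) [Field F] [CharZero F] (H : Type*) [AddCommGroup H] [Module F H]

variable {F H}


namespace Raw

variable {n : ℕ} {a b : Finset (Fin n)} {σ τ : Equiv.Perm (Fin n)}

lemma mem_permsOn : σ ∈ permsOn n a ↔ ∀ i ∉ a, σ i = i := by
  simp [permsOn]

lemma one_mem_permsOn : (1 : Equiv.Perm (Fin n)) ∈ permsOn n a := by
  simp [mem_permsOn]

lemma mul_mem_permsOn (hσ : σ ∈ permsOn n a) (hτ : τ ∈ permsOn n a) :
    σ * τ ∈ permsOn n a := by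
  rw [mem_permsOn] at *
  intro i hi
  simp [Equiv.Perm.mul_apply, hτ i hi, hσ i hi]

lemma inv_mem_permsOn (hσ : σ ∈ permsOn n a) : σ⁻¹ ∈ permsOn n a := by
  rw [mem_permsOn] at *
  intro i hi
  have := hσ i hi
  conv_lhs => rw [← this]
  simp

lemma apply_mem_of_permsOn (hσ : σ ∈ permsOn n a) {i : Fin n} (hi : i ∈ a) : σ i ∈ a := by
  by_contra h
  rw [mem_permsOn] at hσ
  have h2 : σ (σ i) = σ i := hσ (σ i) h
  have : σ i = i := σ.injective h2
  rw [this] at h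
  exact h hi

lemma permsOn_mono (hab : a ⊆ b) : permsOn n a ⊆ permsOn n b := by
  intro σ hσ
  rw [mem_permsOn] at *
  exact fun i hi => hσ i (fun h => hi (hab h))

lemma swap_mem_permsOn {i j : Fin n} (hi : i ∈ a) (hj : j ∈ a) :
    Equiv.swap i j ∈ permsOn n a := by
  rw [mem_permsOn]
  intro x hx
  exact Equiv.swap_apply_of_ne_of_ne (fun h => hx (h ▸ hi)) (fun h => hx (h ▸ hj))

lemma card_permsOn : (permsOn n a).card = a.card.factorial := by
  classical
  have h1 : (permsOn n a).card = Fintype.card {σ : Equiv.Perm (Fin n) // ∀ i, i ∉ a → σ i = i} := by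
    rw [Fintype.card_subtype]
    rfl
  rw [h1]
  rw [Fintype.card_congr (Equiv.Perm.subtypeEquivSubtypePerm (fun i => i ∈ a)).symm,
    Fintype.card_perm, Fintype.card_coe]

lemma permMap_one : permMap F H n 1 = LinearMap.id := by
  have : (1 : Equiv.Perm (Fin n)) = Equiv.refl (Fin n) := rfl
  rw [permMap, this, PiTensorProduct.reindex_refl]
  rfl

lemma permMap_mul_apply (v : TP F H n) :
    permMap F H n (σ * τ) v = permMap F H n σ (permMap F H n τ v) := by
  have : (σ * τ : Equiv.Perm (Fin n)) = (τ : Fin n ≃ Fin n).trans σ := rfl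
  rw [permMap, permMap, permMap, this]
  exact (PiTensorProduct.reindex_reindex τ σ v).symm

end Raw



namespace Raw2

open Raw

variable {n : ℕ} {a b : Finset (Fin n)} {σ τ : Equiv.Perm (Fin n)} {v : TP F H n}

lemma factorial_cast_ne : ((a.card.factorial : F)) ≠ 0 :=
  Nat.cast_ne_zero.mpr (Nat.factorial_ne_zero _)

lemma symOn_apply (v : TP F H n) :
    symOn F H n a v = (a.card.factorial : F)⁻¹ • ∑ σ ∈ permsOn n a, permMap F H n σ v := by
  simp [symOn, LinearMap.sum_apply]

lemma altOn_apply (v : TP F H n) :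
    altOn F H n a v = (a.card.factorial : F)⁻¹ •
      ∑ σ ∈ permsOn n a, (Equiv.Perm.sign σ : ℤ) • permMap F H n σ v := by
  simp [altOn, LinearMap.sum_apply]

lemma sum_permsOn_mul_left {M : Type*} [AddCommMonoid M] (hσ : σ ∈ permsOn n a)
    (f : Equiv.Perm (Fin n) → M) :
    ∑ τ ∈ permsOn n a, f (σ * τ) = ∑ τ ∈ permsOn n a, f τ := by
  apply Finset.sum_nbij' (fun τ => σ * τ) (fun τ => σ⁻¹ * τ)
  · intro τ hτ; exact mul_mem_permsOn hσ hτ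
  · intro τ hτ; exact mul_mem_permsOn (inv_mem_permsOn hσ) hτ
  · intro τ _; group
  · intro τ _; group
  · intro τ _; rfl

lemma sum_permsOn_mul_right {M : Type*} [AddCommMonoid M] (hσ : σ ∈ permsOn n a)
    (f : Equiv.Perm (Fin n) → M) :
    ∑ τ ∈ permsOn n a, f (τ * σ) = ∑ τ ∈ permsOn n a, f τ := by
  apply Finset.sum_nbij' (fun τ => τ * σ) (fun τ => τ * σ⁻¹)
  · intro τ hτ; exact mul_mem_permsOn hτ hσ
  · intro τ hτ; exact mul_mem_permsOn hτ (inv_mem_permsOn hσ)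
  · intro τ _; group
  · intro τ _; group
  · intro τ _; rfl


lemma zsmul_sum {M : Type*} [AddCommGroup M] {ι : Type*} (s : Finset ι) (c : ℤ) (f : ι → M) :
    ∑ i ∈ s, c • f i = c • ∑ i ∈ s, f i := by
  classical
  induction s using Finset.induction with
  | empty => simp
  | insert _ _ h ih => rw [Finset.sum_insert h, Finset.sum_insert h, ih, smul_add]

lemma sgn_smul_sgn (σ : Equiv.Perm (Fin n)) (x : TP F H n) :
    (Equiv.Perm.sign σ : ℤ) • (Equiv.Perm.sign σ : ℤ) • x = x := by
  rw [smul_smul, ← Units.val_mul, Int.units_mul_self, Units.val_one, one_smul]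

lemma permMap_symOn_apply (hσ : σ ∈ permsOn n a) (v : TP F H n) :
    permMap F H n σ (symOn F H n a v) = symOn F H n a v := by
  rw [symOn_apply, map_smul, map_sum]
  congr 1
  calc ∑ τ ∈ permsOn n a, permMap F H n σ (permMap F H n τ v)
      = ∑ τ ∈ permsOn n a, permMap F H n (σ * τ) v := by
        refine Finset.sum_congr rfl fun τ _ => (permMap_mul_apply v).symm
    _ = ∑ τ ∈ permsOn n a, permMap F H n τ v :=
        sum_permsOn_mul_left hσ (fun τ => permMap F H n τ v)

lemma permMap_altOn_apply (hσ : σ ∈ permsOn n a) (v : TP F H n) :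
    permMap F H n σ (altOn F H n a v) = (Equiv.Perm.sign σ : ℤ) • altOn F H n a v := by
  rw [altOn_apply, map_smul, map_sum, smul_comm]
  congr 1
  calc ∑ τ ∈ permsOn n a, permMap F H n σ ((Equiv.Perm.sign τ : ℤ) • permMap F H n τ v)
      = ∑ τ ∈ permsOn n a, (Equiv.Perm.sign τ : ℤ) • permMap F H n (σ * τ) v := by
        refine Finset.sum_congr rfl fun τ _ => ?_
        rw [map_zsmul, permMap_mul_apply]
    _ = ∑ τ ∈ permsOn n a,
          (Equiv.Perm.sign σ : ℤ) • (Equiv.Perm.sign (σ * τ) : ℤ) • permMap F H n (σ * τ) v := by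
        refine Finset.sum_congr rfl fun τ _ => ?_
        rw [smul_smul, ← Units.val_mul, map_mul, ← mul_assoc, Int.units_mul_self, one_mul]
    _ = ∑ τ ∈ permsOn n a,
          (Equiv.Perm.sign σ : ℤ) • (Equiv.Perm.sign τ : ℤ) • permMap F H n τ v :=
        sum_permsOn_mul_left hσ
          (fun τ => (Equiv.Perm.sign σ : ℤ) • (Equiv.Perm.sign τ : ℤ) • permMap F H n τ v)
    _ = (Equiv.Perm.sign σ : ℤ) •
          ∑ τ ∈ permsOn n a, (Equiv.Perm.sign τ : ℤ) • permMap F H n τ v :=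
        zsmul_sum _ _ _

lemma symOn_permMap_apply (hσ : σ ∈ permsOn n a) (v : TP F H n) :
    symOn F H n a (permMap F H n σ v) = symOn F H n a v := by
  rw [symOn_apply, symOn_apply]
  congr 1
  calc ∑ τ ∈ permsOn n a, permMap F H n τ (permMap F H n σ v)
      = ∑ τ ∈ permsOn n a, permMap F H n (τ * σ) v := by
        refine Finset.sum_congr rfl fun τ _ => (permMap_mul_apply v).symm
    _ = ∑ τ ∈ permsOn n a, permMap F H n τ v :=
        sum_permsOn_mul_right hσ (fun τ => permMap F H n τ v)

lemma altOn_permMap_apply (hσ : σ ∈ permsOn n a) (v : TP F H n) :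
    altOn F H n a (permMap F H n σ v) = (Equiv.Perm.sign σ : ℤ) • altOn F H n a v := by
  rw [altOn_apply, altOn_apply, smul_comm]
  congr 1
  calc ∑ τ ∈ permsOn n a, (Equiv.Perm.sign τ : ℤ) • permMap F H n τ (permMap F H n σ v)
      = ∑ τ ∈ permsOn n a, (Equiv.Perm.sign τ : ℤ) • permMap F H n (τ * σ) v := by
        refine Finset.sum_congr rfl fun τ _ => by rw [permMap_mul_apply]
    _ = ∑ τ ∈ permsOn n a,
          (Equiv.Perm.sign σ : ℤ) • (Equiv.Perm.sign (τ * σ) : ℤ) • permMap F H n (τ * σ) v := by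
        refine Finset.sum_congr rfl fun τ _ => ?_
        rw [smul_smul, ← Units.val_mul, map_mul, mul_comm (Equiv.Perm.sign σ), mul_assoc,
          Int.units_mul_self, mul_one]
    _ = ∑ τ ∈ permsOn n a,
          (Equiv.Perm.sign σ : ℤ) • (Equiv.Perm.sign τ : ℤ) • permMap F H n τ v :=
        sum_permsOn_mul_right hσ
          (fun τ => (Equiv.Perm.sign σ : ℤ) • (Equiv.Perm.sign τ : ℤ) • permMap F H n τ v)
    _ = (Equiv.Perm.sign σ : ℤ) •
          ∑ τ ∈ permsOn n a, (Equiv.Perm.sign τ : ℤ) • permMap F H n τ v :=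
        zsmul_sum _ _ _

lemma symOn_apply_of_fixed (h : ∀ σ ∈ permsOn n a, permMap F H n σ v = v) :
    symOn F H n a v = v := by
  rw [symOn_apply]
  rw [Finset.sum_congr rfl h, Finset.sum_const, card_permsOn, ← Nat.cast_smul_eq_nsmul F,
    inv_smul_smul₀ factorial_cast_ne]

lemma altOn_apply_of_skew
    (h : ∀ σ ∈ permsOn n a, permMap F H n σ v = (Equiv.Perm.sign σ : ℤ) • v) :
    altOn F H n a v = v := by
  rw [altOn_apply]
  have : ∀ σ ∈ permsOn n a, (Equiv.Perm.sign σ : ℤ) • permMap F H n σ v = v := by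
    intro σ hσ
    rw [h σ hσ, sgn_smul_sgn]
  rw [Finset.sum_congr rfl this, Finset.sum_const, card_permsOn, ← Nat.cast_smul_eq_nsmul F,
    inv_smul_smul₀ factorial_cast_ne]

lemma symOn_symOn (hab : a ⊆ b) (v : TP F H n) :
    symOn F H n b (symOn F H n a v) = symOn F H n b v := by
  rw [symOn_apply (a := a), map_smul, map_sum]
  have : ∀ σ ∈ permsOn n a, symOn F H n b (permMap F H n σ v) = symOn F H n b v := by
    intro σ hσ
    exact symOn_permMap_apply (permsOn_mono hab hσ) v
  rw [Finset.sum_congr rfl this, Finset.sum_const, card_permsOn, ← Nat.cast_smul_eq_nsmul F,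
    inv_smul_smul₀ factorial_cast_ne]

lemma altOn_altOn (hab : a ⊆ b) (v : TP F H n) :
    altOn F H n b (altOn F H n a v) = altOn F H n b v := by
  rw [altOn_apply (a := a), map_smul, map_sum]
  have : ∀ σ ∈ permsOn n a,
      altOn F H n b ((Equiv.Perm.sign σ : ℤ) • permMap F H n σ v) = altOn F H n b v := by
    intro σ hσ
    rw [map_zsmul, altOn_permMap_apply (permsOn_mono hab hσ), sgn_smul_sgn]
  rw [Finset.sum_congr rfl this, Finset.sum_const, card_permsOn, ← Nat.cast_smul_eq_nsmul F,
    inv_smul_smul₀ factorial_cast_ne]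

lemma permsOn_commute (hd : Disjoint a b) (hσ : σ ∈ permsOn n a) (hτ : τ ∈ permsOn n b) :
    σ * τ = τ * σ := by
  rw [mem_permsOn] at hσ hτ
  ext i
  by_cases hia : i ∈ a
  · have hib : i ∉ b := fun h => (Finset.disjoint_left.mp hd hia) h
    have h1 : τ i = i := hτ i hib
    have h2 : σ i ∈ a := apply_mem_of_permsOn (mem_permsOn.mpr hσ) hia
    have h3 : σ i ∉ b := fun h => (Finset.disjoint_left.mp hd h2) h
    simp [Equiv.Perm.mul_apply, h1, hτ _ h3]
  · have h1 : σ i = i := hσ i hia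
    by_cases hib : i ∈ b
    · have h2 : τ i ∈ b := apply_mem_of_permsOn (mem_permsOn.mpr hτ) hib
      have h3 : τ i ∉ a := fun h => (Finset.disjoint_left.mp hd h) h2
      simp [Equiv.Perm.mul_apply, h1, hσ _ h3]
    · simp [Equiv.Perm.mul_apply, h1, hτ i hib, hσ i hia]

lemma symOn_permMap_comm (hd : Disjoint a b) (hτ : τ ∈ permsOn n b) (v : TP F H n) :
    symOn F H n a (permMap F H n τ v) = permMap F H n τ (symOn F H n a v) := by
  rw [symOn_apply, symOn_apply, map_smul, map_sum]
  congr 1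
  refine Finset.sum_congr rfl fun σ hσ => ?_
  rw [← permMap_mul_apply, ← permMap_mul_apply, permsOn_commute hd hσ hτ]

lemma symOn_altOn_comm (hd : Disjoint a b) (v : TP F H n) :
    symOn F H n a (altOn F H n b v) = altOn F H n b (symOn F H n a v) := by
  rw [altOn_apply (a := b), map_smul, map_sum, altOn_apply (a := b)]
  congr 1
  refine Finset.sum_congr rfl fun τ hτ => ?_
  rw [map_zsmul, symOn_permMap_comm hd hτ]

lemma altOn_apply_eq_zero {i j : Fin n} (hij : i ≠ j) (hi : i ∈ a) (hj : j ∈ a)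
    (h : permMap F H n (Equiv.swap i j) v = v) : altOn F H n a v = 0 := by
  have h1 := altOn_permMap_apply (swap_mem_permsOn hi hj) v
  rw [h, Equiv.Perm.sign_swap hij] at h1
  have h2 : altOn F H n a v + altOn F H n a v = 0 := by
    nth_rewrite 1 [h1]
    simp
  have h3 : (2 : F) • altOn F H n a v = 0 := by
    rw [two_smul]; exact h2
  rcases smul_eq_zero.mp h3 with h | h
  · exact absurd h two_ne_zero
  · exact h

lemma mem_Hgen_iff :
    v ∈ Hgen F H n a ↔ symOn F H n a v = v ∧ altOn F H n aᶜ v = v := by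
  constructor
  · rintro ⟨x, rfl⟩
    rw [LinearMap.comp_apply]
    constructor
    · exact symOn_symOn (subset_refl a) _
    · rw [symOn_altOn_comm disjoint_compl_right, altOn_altOn (subset_refl aᶜ)]
  · rintro ⟨h1, h2⟩
    exact ⟨v, by rw [LinearMap.comp_apply, h2, h1]⟩

end Raw2


namespace Raw3

open Raw Raw2

variable {n : ℕ} {a b : Finset (Fin n)} {σ τ : Equiv.Perm (Fin n)} {v : TP F H n}

lemma nsmul_sum {M : Type*} [AddCommGroup M] {ι : Type*} (s : Finset ι) (c : ℕ) (f : ι → M) :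
    ∑ i ∈ s, c • f i = c • ∑ i ∈ s, f i := by
  classical
  induction s using Finset.induction with
  | empty => simp
  | insert _ _ h ih => rw [Finset.sum_insert h, Finset.sum_insert h, ih, smul_add]

lemma usmul_usmul (u : ℤˣ) {M : Type*} [AddCommGroup M] (x : M) :
    (u : ℤ) • (u : ℤ) • x = x := by
  rw [smul_smul, ← Units.val_mul, Int.units_mul_self, Units.val_one, one_smul]

lemma insert_decomp {p : Fin n} (hp : p ∉ a) (ε : Equiv.Perm (Fin n) →* ℤˣ)
    (hv : ∀ τ ∈ permsOn n a, permMap F H n τ v = (ε τ : ℤ) • v) :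
    ∑ σ ∈ permsOn n (insert p a), (ε σ : ℤ) • permMap F H n σ v
      = a.card.factorial •
        ∑ i ∈ insert p a, (ε (Equiv.swap p i) : ℤ) • permMap F H n (Equiv.swap p i) v := by
  classical
  have hpmem : p ∈ insert p a := Finset.mem_insert_self p a
  have key : ∑ σ ∈ permsOn n (insert p a), (ε σ : ℤ) • permMap F H n σ v
      = ∑ x ∈ (insert p a) ×ˢ permsOn n a,
          (ε (Equiv.swap p x.1) : ℤ) • permMap F H n (Equiv.swap p x.1) v := by
    apply Finset.sum_nbij' (fun σ => (σ p, Equiv.swap p (σ p) * σ))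
      (fun x => Equiv.swap p x.1 * x.2)
    · intro σ hσ
      rw [Finset.mem_product]
      constructor
      · exact apply_mem_of_permsOn hσ hpmem
      · rw [mem_permsOn]
        intro i hi
        by_cases hip : i = p
        · subst hip
          simp [Equiv.Perm.mul_apply, Equiv.swap_apply_right]
        · have hins : i ∉ insert p a := by
            simp [Finset.mem_insert, hip, hi]
          have h1 : σ i = i := mem_permsOn.mp hσ i hins
          have h2 : i ≠ σ p := by
            intro h
            exact hins (h ▸ apply_mem_of_permsOn hσ hpmem)
          simp [Equiv.Perm.mul_apply, h1, Equiv.swap_apply_of_ne_of_ne hip h2]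
    · intro x hx
      rw [Finset.mem_product] at hx
      exact mul_mem_permsOn (swap_mem_permsOn hpmem hx.1)
        (permsOn_mono (Finset.subset_insert p a) hx.2)
    · intro σ _
      rw [← mul_assoc, Equiv.swap_mul_self, one_mul]
    · intro x hx
      rw [Finset.mem_product] at hx
      have hτp : x.2 p = p := mem_permsOn.mp hx.2 p hp
      have h1 : (Equiv.swap p x.1 * x.2) p = x.1 := by
        simp [Equiv.Perm.mul_apply, hτp, Equiv.swap_apply_left]
      have h2 : Equiv.swap p ((Equiv.swap p x.1 * x.2) p) * (Equiv.swap p x.1 * x.2) = x.2 := by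
        rw [h1, ← mul_assoc, Equiv.swap_mul_self, one_mul]
      exact Prod.ext h1 h2
    · intro σ hσ
      set w := Equiv.swap p (σ p) with hw
      set ρ := Equiv.swap p (σ p) * σ with hρ
      have hρa : ρ ∈ permsOn n a := by
        rw [mem_permsOn]
        intro i hi
        by_cases hip : i = p
        · subst hip
          simp [hρ, Equiv.Perm.mul_apply, Equiv.swap_apply_right]
        · have hins : i ∉ insert p a := by simp [Finset.mem_insert, hip, hi]
          have h1 : σ i = i := mem_permsOn.mp hσ i hins
          have h2 : i ≠ σ p := by
            intro h
            exact hins (h ▸ apply_mem_of_permsOn hσ hpmem)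
          simp [hρ, Equiv.Perm.mul_apply, h1, Equiv.swap_apply_of_ne_of_ne hip h2]
      have hσw : σ = w * ρ := by
        rw [hρ, hw, ← mul_assoc, Equiv.swap_mul_self, one_mul]
      have hPv : permMap F H n σ v = (ε ρ : ℤ) • permMap F H n w v := by
        conv_lhs => rw [hσw]
        rw [permMap_mul_apply, hv ρ hρa, map_zsmul]
      rw [hPv, hσw, map_mul, smul_smul, Units.val_mul, mul_assoc, ← Units.val_mul,
        Int.units_mul_self, Units.val_one, mul_one]
  rw [key, Finset.sum_product]
  have : ∀ i ∈ insert p a,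
      (∑ _τ ∈ permsOn n a, (ε (Equiv.swap p i) : ℤ) • permMap F H n (Equiv.swap p i) v)
        = a.card.factorial • ((ε (Equiv.swap p i) : ℤ) • permMap F H n (Equiv.swap p i) v) := by
    intro i _
    rw [Finset.sum_const, card_permsOn]
  rw [Finset.sum_congr rfl this, nsmul_sum]

lemma perm_eq_one_of_card_le_one (h : a.card ≤ 1) (hσ : σ ∈ permsOn n a) : σ = 1 := by
  apply Equiv.ext
  intro i
  simp only [Equiv.Perm.coe_one, id_eq]
  by_cases hi : i ∈ a
  · by_contra hne
    have h2 : σ i ∈ a := apply_mem_of_permsOn hσ hi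
    exact hne (Finset.card_le_one.mp h _ h2 _ hi)
  · exact mem_permsOn.mp hσ i hi

lemma symOn_of_card_le_one (h : a.card ≤ 1) (v : TP F H n) : symOn F H n a v = v := by
  apply symOn_apply_of_fixed
  intro σ hσ
  rw [perm_eq_one_of_card_le_one h hσ, permMap_one]
  rfl

lemma altOn_of_card_le_one (h : a.card ≤ 1) (v : TP F H n) : altOn F H n a v = v := by
  apply altOn_apply_of_skew
  intro σ hσ
  rw [perm_eq_one_of_card_le_one h hσ, permMap_one, map_one]
  simp

lemma permMap_of_symOn_fixed (hS : symOn F H n a v = v) (hσ : σ ∈ permsOn n a) :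
    permMap F H n σ v = v := by
  conv_lhs => rw [← hS]
  rw [permMap_symOn_apply hσ, hS]

lemma permMap_of_altOn_fixed (hA : altOn F H n a v = v) (hσ : σ ∈ permsOn n a) :
    permMap F H n σ v = (Equiv.Perm.sign σ : ℤ) • v := by
  conv_lhs => rw [← hA]
  rw [permMap_altOn_apply hσ, hA]

end Raw3

namespace Raw3b
open Raw Raw2 Raw3

lemma card_firstSet {n k : ℕ} (h : k ≤ n) : (firstSet n k).card = k := by
  apply Finset.card_eq_of_bijective (fun i hi => (⟨i, lt_of_lt_of_le hi h⟩ : Fin n))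
  · intro a ha
    have ha' : (a : ℕ) < k := by simpa [firstSet] using ha
    exact ⟨a, ha', Fin.ext rfl⟩
  · intro i hi
    simpa [firstSet] using hi
  · intro i j hi hj hij
    simpa using congrArg Fin.val hij

end Raw3b


namespace Raw4

open Raw Raw2 Raw3 Raw3b

variable {n k : ℕ} {v : TP F H n}

lemma fact_cast_ne (m : ℕ) : ((m.factorial : F)) ≠ 0 :=
  Nat.cast_ne_zero.mpr (Nat.factorial_ne_zero _)

lemma fsmul_sum {ι : Type*} (s : Finset ι) (c : F) (f : ι → TP F H n) :
    ∑ i ∈ s, c • f i = c • ∑ i ∈ s, f i := by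
  classical
  induction s using Finset.induction with
  | empty => simp
  | insert _ _ h ih => rw [Finset.sum_insert h, Finset.sum_insert h, ih, smul_add]

lemma fact_succ_inv (m : ℕ) :
    (((m + 1).factorial : F))⁻¹ * ((m.factorial : F)) = (((m : ℕ) : F) + 1)⁻¹ := by
  rw [Nat.factorial_succ, Nat.cast_mul, mul_inv, mul_assoc,
    inv_mul_cancel₀ (fact_cast_ne m), mul_one, Nat.cast_add_one]

lemma swap_self_one (p : Fin n) : Equiv.swap p p = 1 := by
  rw [Equiv.swap_self]; rfl

lemma alt_insert_apply {p₁ : Fin n} (hkn : k ≤ n) (hp₁ : p₁ ∉ (firstSet n k)ᶜ)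
    (hA : altOn F H n (firstSet n k)ᶜ v = v) :
    altOn F H n (insert p₁ (firstSet n k)ᶜ) v
      = (((n - k : ℕ) : F) + 1)⁻¹ •
        (v - ∑ i ∈ (firstSet n k)ᶜ, permMap F H n (Equiv.swap p₁ i) v) := by
  have hcard : (firstSet n k)ᶜ.card = n - k := by
    rw [Finset.card_compl, card_firstSet hkn, Fintype.card_fin]
  have hAv : ∀ τ ∈ permsOn n (firstSet n k)ᶜ,
      permMap F H n τ v = (Equiv.Perm.sign τ : ℤ) • v :=
    fun τ hτ => permMap_of_altOn_fixed hA hτ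
  rw [altOn_apply, insert_decomp hp₁ Equiv.Perm.sign hAv, Finset.sum_insert hp₁]
  have h2 : ∀ i ∈ (firstSet n k)ᶜ,
      (Equiv.Perm.sign (Equiv.swap p₁ i) : ℤ) • permMap F H n (Equiv.swap p₁ i) v
        = - permMap F H n (Equiv.swap p₁ i) v := by
    intro i hi
    have hne : p₁ ≠ i := fun h => hp₁ (h ▸ hi)
    rw [Equiv.Perm.sign_swap hne]
    simp
  rw [Finset.sum_congr rfl h2, Finset.sum_neg_distrib, swap_self_one, permMap_one, map_one]
  have hins : (insert p₁ (firstSet n k)ᶜ).card = (n - k) + 1 := by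
    rw [Finset.card_insert_of_notMem hp₁, hcard]
  rw [hins, hcard, ← Nat.cast_smul_eq_nsmul F, smul_smul, fact_succ_inv]
  simp [sub_eq_add_neg]

lemma sym_insert_apply {p₂ : Fin n} (hkn : k ≤ n) (hp₂ : p₂ ∉ firstSet n k)
    (hS : symOn F H n (firstSet n k) v = v) :
    symOn F H n (insert p₂ (firstSet n k)) v
      = ((k : F) + 1)⁻¹ •
        (v + ∑ j ∈ firstSet n k, permMap F H n (Equiv.swap p₂ j) v) := by
  have hcard : (firstSet n k).card = k := card_firstSet hkn
  have hSv : ∀ τ ∈ permsOn n (firstSet n k),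
      permMap F H n τ v = (((1 : Equiv.Perm (Fin n) →* ℤˣ) τ : ℤ)) • v := by
    intro τ hτ
    rw [permMap_of_symOn_fixed hS hτ]
    simp
  have e1 : ∑ σ ∈ permsOn n (insert p₂ (firstSet n k)), permMap F H n σ v
      = ∑ σ ∈ permsOn n (insert p₂ (firstSet n k)),
          (((1 : Equiv.Perm (Fin n) →* ℤˣ) σ : ℤ)) • permMap F H n σ v := by
    simp
  rw [symOn_apply, e1, insert_decomp hp₂ 1 hSv, Finset.sum_insert hp₂, swap_self_one,
    permMap_one]
  have h2 : ∀ j ∈ firstSet n k,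
      (((1 : Equiv.Perm (Fin n) →* ℤˣ) (Equiv.swap p₂ j) : ℤ))
          • permMap F H n (Equiv.swap p₂ j) v
        = permMap F H n (Equiv.swap p₂ j) v := by
    intro j _
    simp
  rw [Finset.sum_congr rfl h2]
  have hins : (insert p₂ (firstSet n k)).card = k + 1 := by
    rw [Finset.card_insert_of_notMem hp₂, hcard]
  rw [hins, hcard, ← Nat.cast_smul_eq_nsmul F, smul_smul, fact_succ_inv]
  simp

lemma cross_sym_fixed (hS : symOn F H n (firstSet n k) v = v) :
    symOn F H n (firstSet n k)
        (∑ j ∈ firstSet n k, ∑ i ∈ (firstSet n k)ᶜ, permMap F H n (Equiv.swap j i) v)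
      = ∑ j ∈ firstSet n k, ∑ i ∈ (firstSet n k)ᶜ, permMap F H n (Equiv.swap j i) v := by
  apply symOn_apply_of_fixed
  intro σ hσ
  have step : ∀ j ∈ firstSet n k, ∀ i ∈ (firstSet n k)ᶜ,
      permMap F H n σ (permMap F H n (Equiv.swap j i) v)
        = permMap F H n (Equiv.swap (σ j) i) v := by
    intro j hj i hi
    have hσi : σ i = i := mem_permsOn.mp hσ i (Finset.mem_compl.mp hi)
    have hconj : σ * Equiv.swap j i = Equiv.swap (σ j) i * σ := by
      have h := Equiv.mul_swap_eq_swap_mul σ j i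
      rwa [hσi] at h
    rw [← permMap_mul_apply, hconj, permMap_mul_apply, permMap_of_symOn_fixed hS hσ]
  calc permMap F H n σ
        (∑ j ∈ firstSet n k, ∑ i ∈ (firstSet n k)ᶜ, permMap F H n (Equiv.swap j i) v)
      = ∑ j ∈ firstSet n k, ∑ i ∈ (firstSet n k)ᶜ, permMap F H n (Equiv.swap (σ j) i) v := by
        rw [map_sum]
        refine Finset.sum_congr rfl fun j hj => ?_
        rw [map_sum]
        exact Finset.sum_congr rfl fun i hi => step j hj i hi
    _ = ∑ j ∈ firstSet n k, ∑ i ∈ (firstSet n k)ᶜ, permMap F H n (Equiv.swap j i) v := by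
        apply Finset.sum_nbij' (fun j => σ j) (fun j => σ⁻¹ j)
        · intro j hj; exact apply_mem_of_permsOn hσ hj
        · intro j hj; exact apply_mem_of_permsOn (inv_mem_permsOn hσ) hj
        · intro j _; simp
        · intro j _; simp
        · intro j _; rfl

lemma cross_alt_fixed (hA : altOn F H n (firstSet n k)ᶜ v = v) :
    altOn F H n (firstSet n k)ᶜ
        (∑ j ∈ firstSet n k, ∑ i ∈ (firstSet n k)ᶜ, permMap F H n (Equiv.swap j i) v)
      = ∑ j ∈ firstSet n k, ∑ i ∈ (firstSet n k)ᶜ, permMap F H n (Equiv.swap j i) v := by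
  apply altOn_apply_of_skew
  intro τ hτ
  have step : ∀ j ∈ firstSet n k, ∀ i ∈ (firstSet n k)ᶜ,
      permMap F H n τ (permMap F H n (Equiv.swap j i) v)
        = (Equiv.Perm.sign τ : ℤ) • permMap F H n (Equiv.swap j (τ i)) v := by
    intro j hj i hi
    have hτj : τ j = j := by
      apply mem_permsOn.mp hτ
      rw [Finset.mem_compl]
      simpa using hj
    have hconj : τ * Equiv.swap j i = Equiv.swap j (τ i) * τ := by
      have h := Equiv.mul_swap_eq_swap_mul τ j i
      rwa [hτj] at h
    rw [← permMap_mul_apply, hconj, permMap_mul_apply, permMap_of_altOn_fixed hA hτ,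
      map_zsmul]
  calc permMap F H n τ
        (∑ j ∈ firstSet n k, ∑ i ∈ (firstSet n k)ᶜ, permMap F H n (Equiv.swap j i) v)
      = ∑ j ∈ firstSet n k, ∑ i ∈ (firstSet n k)ᶜ,
          (Equiv.Perm.sign τ : ℤ) • permMap F H n (Equiv.swap j (τ i)) v := by
        rw [map_sum]
        refine Finset.sum_congr rfl fun j hj => ?_
        rw [map_sum]
        exact Finset.sum_congr rfl fun i hi => step j hj i hi
    _ = (Equiv.Perm.sign τ : ℤ) •
          ∑ j ∈ firstSet n k, ∑ i ∈ (firstSet n k)ᶜ, permMap F H n (Equiv.swap j (τ i)) v := by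
        rw [← zsmul_sum]
        refine Finset.sum_congr rfl fun j hj => ?_
        rw [zsmul_sum]
    _ = (Equiv.Perm.sign τ : ℤ) •
          ∑ j ∈ firstSet n k, ∑ i ∈ (firstSet n k)ᶜ, permMap F H n (Equiv.swap j i) v := by
        congr 1
        refine Finset.sum_congr rfl fun j hj => ?_
        apply Finset.sum_nbij' (fun i => τ i) (fun i => τ⁻¹ i)
        · intro i hi
          exact apply_mem_of_permsOn hτ hi
        · intro i hi
          exact apply_mem_of_permsOn (inv_mem_permsOn hτ) hi
        · intro i _; simp
        · intro i _; simp
        · intro i _; rfl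

end Raw4

namespace Raw5

open Raw Raw2 Raw3 Raw3b Raw4

variable {n k : ℕ} {v : TP F H n}

lemma conjS {p₁ : Fin n} (hp₁ : p₁ ∈ firstSet n k)
    (hS : symOn F H n (firstSet n k) v = v) :
    ∀ j ∈ firstSet n k, ∀ i ∈ (firstSet n k)ᶜ,
      symOn F H n (firstSet n k) (permMap F H n (Equiv.swap j i) v)
        = symOn F H n (firstSet n k) (permMap F H n (Equiv.swap p₁ i) v) := by
  intro j hj i hi
  set σ := Equiv.swap p₁ j with hσdef
  have hσmem : σ ∈ permsOn n (firstSet n k) := swap_mem_permsOn hp₁ hj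
  have hip₁ : i ≠ p₁ := fun h => (Finset.mem_compl.mp hi) (h ▸ hp₁)
  have hij : i ≠ j := fun h => (Finset.mem_compl.mp hi) (h ▸ hj)
  have hσp₁ : σ p₁ = j := Equiv.swap_apply_left p₁ j
  have hσi : σ i = i := Equiv.swap_apply_of_ne_of_ne hip₁ hij
  have hconj : σ * Equiv.swap p₁ i = Equiv.swap j i * σ := by
    have h := Equiv.mul_swap_eq_swap_mul σ p₁ i
    rwa [hσp₁, hσi] at h
  calc symOn F H n (firstSet n k) (permMap F H n (Equiv.swap j i) v)
      = symOn F H n (firstSet n k)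
          (permMap F H n (Equiv.swap j i) (permMap F H n σ v)) := by
        rw [permMap_of_symOn_fixed hS hσmem]
    _ = symOn F H n (firstSet n k) (permMap F H n (Equiv.swap j i * σ) v) := by
        rw [permMap_mul_apply]
    _ = symOn F H n (firstSet n k) (permMap F H n (σ * Equiv.swap p₁ i) v) := by
        rw [hconj]
    _ = symOn F H n (firstSet n k)
          (permMap F H n σ (permMap F H n (Equiv.swap p₁ i) v)) := by
        rw [permMap_mul_apply]
    _ = symOn F H n (firstSet n k) (permMap F H n (Equiv.swap p₁ i) v) :=
        symOn_permMap_apply hσmem _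

lemma conjA {p₂ : Fin n} (hp₂ : p₂ ∈ (firstSet n k)ᶜ)
    (hA : altOn F H n (firstSet n k)ᶜ v = v) :
    ∀ j ∈ firstSet n k, ∀ i ∈ (firstSet n k)ᶜ,
      altOn F H n (firstSet n k)ᶜ (permMap F H n (Equiv.swap j i) v)
        = altOn F H n (firstSet n k)ᶜ (permMap F H n (Equiv.swap p₂ j) v) := by
  intro j hj i hi
  set σ := Equiv.swap p₂ i with hσdef
  have hσmem : σ ∈ permsOn n (firstSet n k)ᶜ := swap_mem_permsOn hp₂ hi
  have hjp₂ : j ≠ p₂ := fun h => (Finset.mem_compl.mp hp₂) (h ▸ hj)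
  have hji : j ≠ i := fun h => (Finset.mem_compl.mp hi) (h ▸ hj)
  have hσp₂ : σ p₂ = i := Equiv.swap_apply_left p₂ i
  have hσj : σ j = j := Equiv.swap_apply_of_ne_of_ne hjp₂ hji
  have hconj : σ * Equiv.swap p₂ j = Equiv.swap i j * σ := by
    have h := Equiv.mul_swap_eq_swap_mul σ p₂ j
    rwa [hσp₂, hσj] at h
  have key : (Equiv.Perm.sign σ : ℤ) •
        altOn F H n (firstSet n k)ᶜ (permMap F H n (Equiv.swap i j) v)
      = (Equiv.Perm.sign σ : ℤ) •
        altOn F H n (firstSet n k)ᶜ (permMap F H n (Equiv.swap p₂ j) v) := by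
    calc (Equiv.Perm.sign σ : ℤ) •
          altOn F H n (firstSet n k)ᶜ (permMap F H n (Equiv.swap i j) v)
        = altOn F H n (firstSet n k)ᶜ
            (permMap F H n (Equiv.swap i j) ((Equiv.Perm.sign σ : ℤ) • v)) := by
          rw [map_zsmul, map_zsmul]
      _ = altOn F H n (firstSet n k)ᶜ
            (permMap F H n (Equiv.swap i j) (permMap F H n σ v)) := by
          rw [permMap_of_altOn_fixed hA hσmem]
      _ = altOn F H n (firstSet n k)ᶜ (permMap F H n (Equiv.swap i j * σ) v) := by
          rw [permMap_mul_apply]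
      _ = altOn F H n (firstSet n k)ᶜ (permMap F H n (σ * Equiv.swap p₂ j) v) := by
          rw [hconj]
      _ = altOn F H n (firstSet n k)ᶜ
            (permMap F H n σ (permMap F H n (Equiv.swap p₂ j) v)) := by
          rw [permMap_mul_apply]
      _ = (Equiv.Perm.sign σ : ℤ) •
            altOn F H n (firstSet n k)ᶜ (permMap F H n (Equiv.swap p₂ j) v) :=
          altOn_permMap_apply hσmem _
  calc altOn F H n (firstSet n k)ᶜ (permMap F H n (Equiv.swap j i) v)
      = altOn F H n (firstSet n k)ᶜ (permMap F H n (Equiv.swap i j) v) := by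
        rw [Equiv.swap_comm]
    _ = (Equiv.Perm.sign σ : ℤ) • (Equiv.Perm.sign σ : ℤ) •
          altOn F H n (firstSet n k)ᶜ (permMap F H n (Equiv.swap i j) v) := by
        rw [usmul_usmul]
    _ = (Equiv.Perm.sign σ : ℤ) • (Equiv.Perm.sign σ : ℤ) •
          altOn F H n (firstSet n k)ᶜ (permMap F H n (Equiv.swap p₂ j) v) := by
        rw [key]
    _ = altOn F H n (firstSet n k)ᶜ (permMap F H n (Equiv.swap p₂ j) v) :=
        usmul_usmul _ _

lemma homotopy_core {p₁ p₂ : Fin n} (hk1 : 1 ≤ k) (hkn : k < n)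
    (hp₁ : (p₁ : ℕ) = k - 1) (hp₂ : (p₂ : ℕ) = k)
    (hS : symOn F H n (firstSet n k) v = v) (hA : altOn F H n (firstSet n k)ᶜ v = v) :
    ((k : F) * (((n - k : ℕ) : F) + 1)) •
        symOn F H n (firstSet n k) (altOn F H n (insert p₁ (firstSet n k)ᶜ) v)
      + (((n - k : ℕ) : F) * ((k : F) + 1)) •
        altOn F H n (firstSet n k)ᶜ (symOn F H n (insert p₂ (firstSet n k)) v)
      = (n : F) • v := by
  have hkn' : k ≤ n := le_of_lt hkn
  have hp₁fk : p₁ ∈ firstSet n k := by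
    simp only [firstSet, Finset.mem_filter, Finset.mem_univ, true_and, hp₁]
    omega
  have hp₁nc : p₁ ∉ (firstSet n k)ᶜ := by
    rw [Finset.mem_compl]
    simp [hp₁fk]
  have hp₂c : p₂ ∈ (firstSet n k)ᶜ := by
    rw [Finset.mem_compl]
    simp only [firstSet, Finset.mem_filter, Finset.mem_univ, true_and, hp₂]
    omega
  have hp₂nfk : p₂ ∉ firstSet n k := Finset.mem_compl.mp hp₂c
  have hcardfk : (firstSet n k).card = k := card_firstSet hkn'
  have hcardc : (firstSet n k)ᶜ.card = n - k := by
    rw [Finset.card_compl, hcardfk, Fintype.card_fin]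
  have hqne : (((n - k : ℕ) : F) + 1) ≠ 0 := by
    rw [← Nat.cast_add_one]
    exact Nat.cast_ne_zero.mpr (Nat.succ_ne_zero _)
  have hkne : ((k : F) + 1) ≠ 0 := by
    rw [← Nat.cast_add_one]
    exact Nat.cast_ne_zero.mpr (Nat.succ_ne_zero _)
  rw [alt_insert_apply hkn' hp₁nc hA, sym_insert_apply hkn' hp₂nfk hS, map_smul, map_smul,
    smul_smul, smul_smul, mul_assoc, mul_inv_cancel₀ hqne, mul_one,
    mul_assoc, mul_inv_cancel₀ hkne, mul_one]
  rw [map_sub, map_sum, map_add, map_sum, hS, hA]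
  -- key1
  have key1 : ∑ j ∈ firstSet n k, ∑ i ∈ (firstSet n k)ᶜ,
        symOn F H n (firstSet n k) (permMap F H n (Equiv.swap j i) v)
      = (k : F) • ∑ i ∈ (firstSet n k)ᶜ,
          symOn F H n (firstSet n k) (permMap F H n (Equiv.swap p₁ i) v) := by
    have : ∀ j ∈ firstSet n k,
        (∑ i ∈ (firstSet n k)ᶜ,
          symOn F H n (firstSet n k) (permMap F H n (Equiv.swap j i) v))
        = ∑ i ∈ (firstSet n k)ᶜ,
            symOn F H n (firstSet n k) (permMap F H n (Equiv.swap p₁ i) v) := by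
      intro j hj
      exact Finset.sum_congr rfl fun i hi => conjS hp₁fk hS j hj i hi
    rw [Finset.sum_congr rfl this, Finset.sum_const, hcardfk, ← Nat.cast_smul_eq_nsmul F]
  have key2 : ∑ j ∈ firstSet n k, ∑ i ∈ (firstSet n k)ᶜ,
        altOn F H n (firstSet n k)ᶜ (permMap F H n (Equiv.swap j i) v)
      = ((n - k : ℕ) : F) • ∑ j ∈ firstSet n k,
          altOn F H n (firstSet n k)ᶜ (permMap F H n (Equiv.swap p₂ j) v) := by
    have : ∀ j ∈ firstSet n k,
        (∑ i ∈ (firstSet n k)ᶜ,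
          altOn F H n (firstSet n k)ᶜ (permMap F H n (Equiv.swap j i) v))
        = ((n - k : ℕ) : F) •
            altOn F H n (firstSet n k)ᶜ (permMap F H n (Equiv.swap p₂ j) v) := by
      intro j hj
      rw [Finset.sum_congr rfl (fun i hi => conjA hp₂c hA j hj i hi), Finset.sum_const,
        hcardc, ← Nat.cast_smul_eq_nsmul F]
    rw [Finset.sum_congr rfl this, fsmul_sum]
  -- relate to the cross sum
  have hSL : ∑ j ∈ firstSet n k, ∑ i ∈ (firstSet n k)ᶜ,
        symOn F H n (firstSet n k) (permMap F H n (Equiv.swap j i) v)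
      = ∑ j ∈ firstSet n k, ∑ i ∈ (firstSet n k)ᶜ, permMap F H n (Equiv.swap j i) v := by
    rw [← cross_sym_fixed hS, map_sum]
    exact Finset.sum_congr rfl fun j hj => by rw [map_sum]
  have hAL : ∑ j ∈ firstSet n k, ∑ i ∈ (firstSet n k)ᶜ,
        altOn F H n (firstSet n k)ᶜ (permMap F H n (Equiv.swap j i) v)
      = ∑ j ∈ firstSet n k, ∑ i ∈ (firstSet n k)ᶜ, permMap F H n (Equiv.swap j i) v := by
    rw [← cross_alt_fixed hA, map_sum]
    exact Finset.sum_congr rfl fun j hj => by rw [map_sum]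
  have hk' : (k : F) • ∑ i ∈ (firstSet n k)ᶜ,
        symOn F H n (firstSet n k) (permMap F H n (Equiv.swap p₁ i) v)
      = ((n - k : ℕ) : F) • ∑ j ∈ firstSet n k,
          altOn F H n (firstSet n k)ᶜ (permMap F H n (Equiv.swap p₂ j) v) := by
    rw [← key1, ← key2, hSL, hAL]
  rw [smul_sub, smul_add, hk']
  have habel : ∀ A B Y : TP F H n, A - Y + (B + Y) = A + B := by
    intro A B Y
    abel
  rw [habel, ← add_smul]
  congr 1
  have : ((n - k : ℕ) : F) = (n : F) - (k : F) := by
    rw [Nat.cast_sub hkn']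
  rw [this]
  ring

end Raw5


namespace Raw6

open Raw Raw2 Raw3 Raw3b Raw4 Raw5

variable {n : ℕ} {v : TP F H n}

lemma lastSet_eq_compl_firstSet (q : ℕ) : lastSet n q = (firstSet n (n - q))ᶜ := by
  ext i
  simp only [lastSet, firstSet, Finset.mem_filter, Finset.mem_univ, true_and,
    Finset.mem_compl, not_lt]

lemma lastSet_succ_eq_insert {q : ℕ} (hq : q ≤ n - 1) (hn : 1 ≤ n)
    (p₁ : Fin n) (hp₁ : (p₁ : ℕ) = n - q - 1) :
    lastSet n (q + 1) = insert p₁ (firstSet n (n - q))ᶜ := by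
  ext i
  simp only [lastSet, firstSet, Finset.mem_insert, Finset.mem_filter, Finset.mem_univ,
    true_and, Finset.mem_compl, not_lt, Fin.ext_iff, hp₁]
  have := i.isLt
  omega

lemma firstSet_succ_eq_insert {k : ℕ} (hk : k < n) (p₂ : Fin n) (hp₂ : (p₂ : ℕ) = k) :
    firstSet n (k + 1) = insert p₂ (firstSet n k) := by
  ext i
  simp only [firstSet, Finset.mem_insert, Finset.mem_filter, Finset.mem_univ, true_and,
    Fin.ext_iff, hp₂]
  omega

lemma firstSet_mono {k l : ℕ} (h : k ≤ l) : firstSet n k ⊆ firstSet n l := by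
  intro i hi
  simp only [firstSet, Finset.mem_filter, Finset.mem_univ, true_and] at *
  omega

/-- `d*` maps `H_{k,q}` into `H_{k+1,q-1}`: skewness of the symmetrisation. -/
lemma alt_compl_symOn_succ {k : ℕ} (hkn : k < n)
    (hA : altOn F H n (firstSet n k)ᶜ v = v) :
    altOn F H n (firstSet n (k + 1))ᶜ (symOn F H n (firstSet n (k + 1)) v)
      = symOn F H n (firstSet n (k + 1)) v := by
  apply altOn_apply_of_skew
  intro τ hτ
  have hd : Disjoint (firstSet n (k + 1)) (firstSet n (k + 1))ᶜ := disjoint_compl_right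
  have hτ' : τ ∈ permsOn n (firstSet n k)ᶜ :=
    permsOn_mono (Finset.compl_subset_compl.mpr (firstSet_mono (Nat.le_succ k))) hτ
  rw [← symOn_permMap_comm hd hτ, permMap_of_altOn_fixed hA hτ', map_zsmul]

end Raw6

/-- Rawnsley; exactness of the d̆-sequence: the sequence
`0 → H^{⊙n} = H_{n,0} →^{d̆_0} H_{n-1,1} →^{d̆_1} ⋯ →^{d̆_{n-1}} H_{0,n} = H^{∧n} → 0`
is exact: `d̆_0` is injective, `d̆_{n-1}` is surjective, and for `1 ≤ q ≤ n-1`,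
`ker(d̆_q : H_{n-q,q} → H_{n-q-1,q+1}) = im(d̆_{q-1} : H_{n-q+1,q-1} → H_{n-q,q})`. -/
theorem dOp_sequence_exact (n : ℕ) (hn : 1 ≤ n) :
    (∀ v ∈ Hmix F H n n, dOp F H n 1 v = 0 → v = 0) ∧
    (∀ w ∈ Hmix F H n 0, ∃ v ∈ Hmix F H n 1, dOp F H n n v = w) ∧
    (∀ q : ℕ, 1 ≤ q → q ≤ n - 1 → ∀ v ∈ Hmix F H n (n - q),
      (dOp F H n (q + 1) v = 0 ↔ ∃ u ∈ Hmix F H n (n - q + 1), dOp F H n q u = v)) := by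
  open Raw Raw2 Raw3 Raw3b Raw4 Raw5 Raw6 in
  refine ⟨?_, ?_, ?_⟩
  · -- injectivity of d̆₀
    intro v _ hd
    have hcard : (lastSet n 1).card ≤ 1 := by
      apply Finset.card_le_one.mpr
      intro a ha b hb
      simp only [lastSet, Finset.mem_filter, Finset.mem_univ, true_and] at ha hb
      have := a.isLt
      have := b.isLt
      apply Fin.ext
      omega
    have h1 : dOp F H n 1 v = v := by
      simp only [dOp, LinearMap.smul_apply, Nat.cast_one, one_smul]
      exact altOn_of_card_le_one hcard v
    rw [h1] at hd
    exact hd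
  · -- surjectivity of d̆_{n-1}
    intro w hw
    have hnne : ((n : ℕ) : F) ≠ 0 := Nat.cast_ne_zero.mpr (by omega)
    have hA0 : altOn F H n (firstSet n 0)ᶜ w = w := (mem_Hgen_iff.mp hw).2
    set x := ((n : ℕ) : F)⁻¹ • w with hx
    refine ⟨symOn F H n (firstSet n 1) (altOn F H n (firstSet n 1)ᶜ x),
      ⟨x, by rw [LinearMap.comp_apply]⟩, ?_⟩
    have hlast : lastSet n n = (firstSet n 0)ᶜ := by
      rw [lastSet_eq_compl_firstSet, Nat.sub_self]
    have hcard1 : (firstSet n 1).card ≤ 1 := le_of_eq (card_firstSet hn)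
    simp only [dOp, LinearMap.smul_apply, hlast]
    rw [symOn_of_card_le_one hcard1,
      altOn_altOn (Finset.compl_subset_compl.mpr (firstSet_mono (by omega))), hx,
      map_smul, hA0, smul_smul, mul_inv_cancel₀ hnne, one_smul]
  · -- exactness in the middle
    intro q hq1 hq v hv
    have hk1 : 1 ≤ n - q := by omega
    have hkn : n - q < n := by omega
    set k := n - q with hkdef
    have hnk : n - k = q := by omega
    have hp₁lt : k - 1 < n := by omega
    have hp₂lt : k < n := hkn
    set p₁ : Fin n := ⟨k - 1, hp₁lt⟩ with hp₁def
    set p₂ : Fin n := ⟨k, hp₂lt⟩ with hp₂def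
    have hp₁v : (p₁ : ℕ) = k - 1 := rfl
    have hp₂v : (p₂ : ℕ) = k := rfl
    have hS : symOn F H n (firstSet n k) v = v := (mem_Hgen_iff.mp hv).1
    have hA : altOn F H n (firstSet n k)ᶜ v = v := (mem_Hgen_iff.mp hv).2
    have hlq : lastSet n q = (firstSet n k)ᶜ := lastSet_eq_compl_firstSet q
    have hlq1 : lastSet n (q + 1) = insert p₁ (firstSet n k)ᶜ :=
      lastSet_succ_eq_insert hq hn p₁ (by omega)
    have hfk1 : firstSet n (k + 1) = insert p₂ (firstSet n k) :=
      firstSet_succ_eq_insert hkn p₂ hp₂v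
    have hnne : ((n : ℕ) : F) ≠ 0 := Nat.cast_ne_zero.mpr (by omega)
    have hqne : ((q : ℕ) : F) ≠ 0 := Nat.cast_ne_zero.mpr (by omega)
    have hq1ne : (((q + 1 : ℕ)) : F) ≠ 0 := Nat.cast_ne_zero.mpr (by omega)
    have hp₁p₂ : p₁ ≠ p₂ := by
      intro h
      have := congrArg Fin.val h
      simp only [hp₁v, hp₂v] at this
      omega
    constructor
    · -- ker ⊆ im
      intro hd
      have hzero : altOn F H n (insert p₁ (firstSet n k)ᶜ) v = 0 := by
        have h1 : ((q + 1 : ℕ) : F) • altOn F H n (lastSet n (q + 1)) v = 0 := by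
          simpa only [dOp, LinearMap.smul_apply] using hd
        rw [hlq1] at h1
        rcases smul_eq_zero.mp h1 with h | h
        · exact absurd h hq1ne
        · exact h
      have hcore := homotopy_core (p₁ := p₁) (p₂ := p₂) hk1 hkn (by omega) hp₂v hS hA
      rw [hzero, map_zero, smul_zero, zero_add, hnk] at hcore
      -- hcore : (q * (k+1)) • altOn fkᶜ (symOn (insert p₂ fk) v) = n • v
      set u := (((n : ℕ) : F)⁻¹ * ((k : F) + 1)) •
        symOn F H n (firstSet n (k + 1)) v with hu
      refine ⟨u, ?_, ?_⟩
      · -- membership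
        apply mem_Hgen_iff.mpr
        constructor
        · rw [hu, map_smul, symOn_symOn (subset_refl _)]
        · rw [hu, map_smul, alt_compl_symOn_succ hkn hA]
      · -- dOp q u = v
        have hsym : symOn F H n (firstSet n (k + 1)) v
            = symOn F H n (insert p₂ (firstSet n k)) v :=
          congrArg (fun s => symOn F H n s v) hfk1
        simp only [dOp, LinearMap.smul_apply, hlq]
        rw [hu, hsym, map_smul, smul_smul]
        have hc : ((q : ℕ) : F) * (((n : ℕ) : F)⁻¹ * ((k : F) + 1))
            = ((n : ℕ) : F)⁻¹ * (((q : ℕ) : F) * ((k : F) + 1)) := by ring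
        rw [hc, ← smul_smul, hcore, smul_smul, inv_mul_cancel₀ hnne, one_smul]
    · -- im ⊆ ker
      rintro ⟨u, hu, rfl⟩
      have hSu : symOn F H n (firstSet n (k + 1)) u = u := (mem_Hgen_iff.mp hu).1
      have hswap : permMap F H n (Equiv.swap p₁ p₂) u = u := by
        apply permMap_of_symOn_fixed hSu
        apply swap_mem_permsOn
        · simp only [firstSet, Finset.mem_filter, Finset.mem_univ, true_and, hp₁v]
          omega
        · simp only [firstSet, Finset.mem_filter, Finset.mem_univ, true_and, hp₂v]
          omega
      have hzero : altOn F H n (insert p₁ (firstSet n k)ᶜ) u = 0 := by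
        apply altOn_apply_eq_zero hp₁p₂ (Finset.mem_insert_self _ _) ?_ hswap
        apply Finset.mem_insert_of_mem
        rw [Finset.mem_compl]
        simp only [firstSet, Finset.mem_filter, Finset.mem_univ, true_and, hp₂v]
        omega
      simp only [dOp, LinearMap.smul_apply, hlq, hlq1]
      rw [map_smul, altOn_altOn (Finset.subset_insert _ _), hzero]
      simp
end
end

section
/- (Well-definedness of d̆*) For all natural numbers k ≥ 1 and q with n = k + q, the operator k·(S_{{1,…,k}} ⊗ id) (symmetrization of the first k tensor positions scaled by k) maps the subspace H_{k−1,q+1} of H^{⊗n} into the subspace H_{k,q}, and on elementary tensors it satisfies k·(S_{{1,…,k}} ⊗ id)(h₁⊙…⊙h_{k−1} ⊗ x₁∧…∧x_{q+1}) = Σ_{i=1}^{q+1} (−1)^{i−1} h₁⊙…⊙h_{k−1}⊙x_i ⊗ x₁∧…∧x̂_i∧…∧x_{q+1}. -/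
open scoped BigOperators

noncomputable section

variable (F : Type*) [Field F] [CharZero F] (H : Type*) [AddCommGroup H] [Module F H]

/-! ### Infrastructure -/

open Equiv Equiv.Perm Finset

section Perms

variable {n m k : ℕ}

/-- extension of a permutation of the first `m` positions to `Fin n`. -/
def extL (n m : ℕ) (h : m ≤ n) (σ : Perm (Fin m)) : Perm (Fin n) :=
  σ.viaFintypeEmbedding (Fin.castLEEmb h)

/-- extension of a permutation of the last `m` positions to `Fin (k+m)`. -/
def extR (k m : ℕ) (τ : Perm (Fin m)) : Perm (Fin (k + m)) :=
  τ.viaFintypeEmbedding (Fin.natAddEmb k)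

lemma range_castLEEmb (h : m ≤ n) :
    Set.range (Fin.castLEEmb h) = {p : Fin n | (p : ℕ) < m} := by
  ext p
  constructor
  · rintro ⟨i, rfl⟩; exact i.isLt
  · intro hp; exact ⟨⟨p, hp⟩, rfl⟩

lemma range_natAddEmb (k m : ℕ) :
    Set.range (Fin.natAddEmb k (m := m)) = {p : Fin (k + m) | k ≤ (p : ℕ)} := by
  ext p
  constructor
  · rintro ⟨i, rfl⟩
    show k ≤ k + (i : ℕ)
    exact Nat.le_add_right _ _
  · intro hp
    simp only [Set.mem_setOf_eq] at hp
    have hlt := p.isLt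
    refine ⟨⟨(p : ℕ) - k, by omega⟩, Fin.ext ?_⟩
    show k + ((p : ℕ) - k) = (p : ℕ)
    omega

lemma extL_apply_lt (h : m ≤ n) (σ : Perm (Fin m)) (p : Fin n) (hp : (p : ℕ) < m) :
    extL n m h σ p = Fin.castLE h (σ ⟨p, hp⟩) :=
  calc extL n m h σ p = extL n m h σ (Fin.castLEEmb h ⟨p, hp⟩) := congrArg _ (Fin.ext rfl)
    _ = Fin.castLEEmb h (σ ⟨p, hp⟩) := Equiv.Perm.viaFintypeEmbedding_apply_image σ _ _
    _ = Fin.castLE h (σ ⟨p, hp⟩) := rfl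

lemma extL_apply_ge (h : m ≤ n) (σ : Perm (Fin m)) (p : Fin n) (hp : m ≤ (p : ℕ)) :
    extL n m h σ p = p := by
  rw [extL, Equiv.Perm.viaFintypeEmbedding_apply_notMem_range]
  rw [range_castLEEmb]
  simp only [Set.mem_setOf_eq]
  omega

lemma extR_apply_natAdd (τ : Perm (Fin m)) (j : Fin m) :
    extR k m τ (Fin.natAdd k j) = Fin.natAdd k (τ j) := by
  have h1 : Fin.natAdd k j = Fin.natAddEmb k j := rfl
  rw [h1, extR, Equiv.Perm.viaFintypeEmbedding_apply_image]
  rfl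

lemma extR_apply_lt (τ : Perm (Fin m)) (p : Fin (k + m)) (hp : (p : ℕ) < k) :
    extR k m τ p = p := by
  rw [extR, Equiv.Perm.viaFintypeEmbedding_apply_notMem_range]
  rw [range_natAddEmb]
  simp only [Set.mem_setOf_eq]
  omega

lemma extL_inv (h : m ≤ n) (σ : Perm (Fin m)) :
    (extL n m h σ)⁻¹ = extL n m h σ⁻¹ :=
  Equiv.Perm.extendDomain_inv _ _

lemma extR_inv (τ : Perm (Fin m)) : (extR k m τ)⁻¹ = extR k m τ⁻¹ :=
  Equiv.Perm.extendDomain_inv _ _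

lemma extL_mul (h : m ≤ n) (σ σ' : Perm (Fin m)) :
    extL n m h (σ * σ') = extL n m h σ * extL n m h σ' :=
  (Equiv.Perm.extendDomain_mul _ _ _).symm

lemma extL_injective (h : m ≤ n) : Function.Injective (extL n m h) := by
  intro σ σ' hσ
  ext i
  have h1 := extL_apply_lt h σ (Fin.castLE h i) i.isLt
  have h2 := extL_apply_lt h σ' (Fin.castLE h i) i.isLt
  rw [hσ] at h1
  rw [h1] at h2
  have := Fin.castLE_injective h h2
  simpa [Fin.ext_iff] using this

lemma extR_injective : Function.Injective (extR k m) := by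
  intro τ τ' hτ
  ext j
  have h1 := extR_apply_natAdd (k := k) τ j
  rw [hτ, extR_apply_natAdd] at h1
  have : Fin.natAdd k (τ' j) = Fin.natAdd k (τ j) := h1
  simpa [Fin.ext_iff] using this.symm

lemma sign_extL (h : m ≤ n) (σ : Perm (Fin m)) :
    Equiv.Perm.sign (extL n m h σ) = Equiv.Perm.sign σ :=
  Equiv.Perm.viaFintypeEmbedding_sign σ _

lemma sign_extR (τ : Perm (Fin m)) :
    Equiv.Perm.sign (extR k m τ) = Equiv.Perm.sign τ :=
  Equiv.Perm.viaFintypeEmbedding_sign τ _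

lemma mem_firstSet (p : Fin n) : p ∈ firstSet n m ↔ (p : ℕ) < m := by
  simp [firstSet]

lemma mem_permsOn {a : Finset (Fin n)} {σ : Perm (Fin n)} :
    σ ∈ permsOn n a ↔ ∀ i, i ∉ a → σ i = i := by
  simp [permsOn]

/-- A permutation fixing everything outside the range of an embedding is the
extension of a permutation. -/
lemma exists_viaFintypeEmbedding_eq (f : Fin m ↪ Fin n) (π : Perm (Fin n))
    (hπ : ∀ b, b ∉ Set.range f → π b = b) :
    ∃ σ : Perm (Fin m), σ.viaFintypeEmbedding f = π := by
  have hmem : ∀ a : Fin m, π (f a) ∈ Set.range f := by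
    intro a
    by_contra hc
    have h1 : π (π (f a)) = π (f a) := hπ _ hc
    have h2 := π.injective h1
    rw [h2] at hc
    exact hc (Set.mem_range_self a)
  choose g hg using hmem
  have hginj : Function.Injective g := by
    intro a b hab
    have : π (f a) = π (f b) := by rw [← hg a, ← hg b, hab]
    exact f.injective (π.injective this)
  have hgbij : Function.Bijective g :=
    (Fintype.bijective_iff_injective_and_card g).2 ⟨hginj, rfl⟩
  refine ⟨Equiv.ofBijective g hgbij, ?_⟩
  ext b
  by_cases hb : b ∈ Set.range f
  · obtain ⟨a, rfl⟩ := hb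
    rw [Equiv.Perm.viaFintypeEmbedding_apply_image]
    rw [Equiv.ofBijective_apply, hg]
  · rw [Equiv.Perm.viaFintypeEmbedding_apply_notMem_range _ _ hb, hπ _ hb]

lemma permsOn_firstSet (h : m ≤ n) :
    permsOn n (firstSet n m) = Finset.image (extL n m h) Finset.univ := by
  ext π
  simp only [Finset.mem_image, Finset.mem_univ, true_and]
  rw [mem_permsOn]
  constructor
  · intro hπ
    exact exists_viaFintypeEmbedding_eq (Fin.castLEEmb h) π (by
      intro b hb
      rw [range_castLEEmb] at hb
      exact hπ b (by simp only [mem_firstSet]; simpa using hb))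
  · rintro ⟨σ, rfl⟩
    intro i hi
    rw [mem_firstSet] at hi
    exact extL_apply_ge h σ i (by omega)

lemma permsOn_compl_firstSet (k m : ℕ) :
    permsOn (k + m) (firstSet (k + m) k)ᶜ = Finset.image (extR k m) Finset.univ := by
  ext π
  simp only [Finset.mem_image, Finset.mem_univ, true_and]
  rw [mem_permsOn]
  constructor
  · intro hπ
    exact exists_viaFintypeEmbedding_eq (Fin.natAddEmb k) π (by
      intro b hb
      rw [range_natAddEmb] at hb
      refine hπ b ?_
      simp only [Finset.mem_compl, not_not, mem_firstSet]
      simp only [Set.mem_setOf_eq] at hb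
      omega)
  · rintro ⟨σ, rfl⟩
    intro i hi
    simp only [Finset.mem_compl, not_not, mem_firstSet] at hi
    exact extR_apply_lt σ i hi

lemma card_firstSet (h : m ≤ n) : (firstSet n m).card = m := by
  have : firstSet n m = Finset.map (Fin.castLEEmb h) Finset.univ := by
    ext p
    simp only [mem_firstSet, Finset.mem_map, Finset.mem_univ, true_and]
    constructor
    · intro hp; exact ⟨⟨p, hp⟩, Fin.ext rfl⟩
    · rintro ⟨i, rfl⟩; exact i.isLt
  rw [this, Finset.card_map, Finset.card_univ, Fintype.card_fin]

lemma card_compl_firstSet (k m : ℕ) : ((firstSet (k + m) k)ᶜ : Finset (Fin (k+m))).card = m := by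
  rw [Finset.card_compl, card_firstSet (Nat.le_add_right k m)]
  simp

end Perms

set_option linter.unusedSectionVars false

section TensorLemmas

open PiTensorProduct

variable {k m n : ℕ}

lemma zsmul_eq_cast_smul (z : ℤ) {n : ℕ} (v : TP F H n) : z • v = ((z : F)) • v :=
  (Int.cast_smul_eq_zsmul F z v).symm

lemma permMap_tprod (n : ℕ) (σ : Perm (Fin n)) (f : Fin n → H) :
    permMap F H n σ (tprod F f) = tprod F (fun p => f (σ.symm p)) := by
  simp [permMap, PiTensorProduct.reindex_tprod]

lemma tpCast_tprod {n n' : ℕ} (hn : n = n') (f : Fin n → H) :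
    tpCast F H hn (tprod F f) = tprod F (fun p => f (Fin.cast hn.symm p)) := by
  simp [tpCast, PiTensorProduct.reindex_tprod]

lemma symOn_firstSet (h : m ≤ n) :
    symOn F H n (firstSet n m)
      = (m.factorial : F)⁻¹ • ∑ σ : Perm (Fin m), permMap F H n (extL n m h σ) := by
  rw [symOn, card_firstSet h, permsOn_firstSet h,
    Finset.sum_image (fun x _ y _ hxy => extL_injective h hxy)]

lemma altOn_compl_firstSet (k m : ℕ) :
    altOn F H (k + m) (firstSet (k + m) k)ᶜ
      = (m.factorial : F)⁻¹ • ∑ τ : Perm (Fin m),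
          (Equiv.Perm.sign τ : ℤ) • permMap F H (k + m) (extR k m τ) := by
  rw [altOn, card_compl_firstSet, permsOn_compl_firstSet,
    Finset.sum_image (fun x _ y _ hxy => extR_injective hxy)]
  congr 1
  exact Finset.sum_congr rfl fun τ _ => by rw [sign_extR]

lemma append_val_lt {α : Type*} (u : Fin k → α) (v : Fin m → α) (p : Fin (k + m))
    (hp : (p : ℕ) < k) : Fin.append u v p = u ⟨p, hp⟩ :=
  (congrArg (Fin.append u v) (Fin.ext rfl : p = Fin.castAdd m ⟨p, hp⟩)).trans
    (Fin.append_left u v ⟨p, hp⟩)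

lemma append_val_ge {α : Type*} (u : Fin k → α) (v : Fin m → α) (p : Fin (k + m))
    (hp : k ≤ (p : ℕ)) :
    Fin.append u v p = v ⟨(p : ℕ) - k, by have := p.isLt; omega⟩ :=
  (congrArg (Fin.append u v)
    (Fin.ext (by show (p : ℕ) = k + ((p : ℕ) - k); omega) :
      p = Fin.natAdd k ⟨(p : ℕ) - k, by have := p.isLt; omega⟩)).trans
    (Fin.append_right u v _)

lemma snoc_val_lt {α : Type*} (g : Fin k → α) (y : α) (r : Fin (k + 1))
    (hr : (r : ℕ) < k) : (Fin.snoc g y : Fin (k + 1) → α) r = g ⟨r, hr⟩ := by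
  have h1 : r = Fin.castSucc ⟨r, hr⟩ := Fin.ext rfl
  conv_lhs => rw [h1]
  rw [Fin.snoc_castSucc]

lemma snoc_val_eq {α : Type*} (g : Fin k → α) (y : α) (r : Fin (k + 1))
    (hr : (r : ℕ) = k) : (Fin.snoc g y : Fin (k + 1) → α) r = y := by
  have h1 : r = Fin.last k := Fin.ext (by simpa using hr)
  conv_lhs => rw [h1]
  rw [Fin.snoc_last]

lemma append_comp_extR (u : Fin k → H) (v : Fin m → H) (τ : Perm (Fin m)) :
    (fun p => Fin.append u v (extR k m τ p)) = Fin.append u (v ∘ τ) := by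
  funext p
  rcases lt_or_ge (p : ℕ) k with hp | hp
  · rw [extR_apply_lt τ p hp, append_val_lt _ _ _ hp, append_val_lt _ _ _ hp]
  · have hpl := p.isLt
    have hj : p = Fin.natAdd k ⟨(p : ℕ) - k, by omega⟩ :=
      Fin.ext (by show (p : ℕ) = k + ((p : ℕ) - k); omega)
    calc Fin.append u v (extR k m τ p)
        = Fin.append u v (extR k m τ (Fin.natAdd k ⟨(p : ℕ) - k, by omega⟩)) := by rw [← hj]
      _ = Fin.append u v (Fin.natAdd k (τ ⟨(p : ℕ) - k, by omega⟩)) := by rw [extR_apply_natAdd]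
      _ = v (τ ⟨(p : ℕ) - k, by omega⟩) := Fin.append_right u v _
      _ = Fin.append u (v ∘ τ) p := (append_val_ge u (v ∘ τ) p hp).symm

lemma append_comp_extL (u : Fin k → H) (v : Fin m → H) (σ : Perm (Fin k)) :
    (fun p => Fin.append u v (extL (k + m) k (Nat.le_add_right k m) σ p))
      = Fin.append (u ∘ σ) v := by
  funext p
  rcases lt_or_ge (p : ℕ) k with hp | hp
  · rw [extL_apply_lt _ σ p hp]
    have hlt : ((Fin.castLE (Nat.le_add_right k m) (σ ⟨p, hp⟩) : Fin (k + m)) : ℕ) < k :=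
      (σ ⟨p, hp⟩).isLt
    rw [append_val_lt _ _ _ hlt, append_val_lt _ _ _ hp]
    exact congrArg u (Fin.ext rfl)
  · rw [extL_apply_ge _ σ p hp, append_val_ge _ _ _ hp, append_val_ge _ _ _ hp]

lemma altOn_tprod (k m : ℕ) (f : Fin (k + m) → H) :
    altOn F H (k + m) (firstSet (k + m) k)ᶜ (tprod F f)
      = (m.factorial : F)⁻¹ • ∑ τ : Perm (Fin m),
          ((Equiv.Perm.sign τ : ℤ) : F) • tprod F (fun p => f (extR k m τ p)) := by
  rw [altOn_compl_firstSet F H k m, LinearMap.smul_apply, LinearMap.sum_apply]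
  congr 1
  refine Fintype.sum_equiv (Equiv.inv _) _ _ fun τ => ?_
  simp only [Equiv.inv_apply]
  rw [← zsmul_eq_cast_smul]
  have happ : ∀ (z : ℤ) (L : TP F H (k + m) →ₗ[F] TP F H (k + m)) (v : TP F H (k + m)),
      (z • L) v = z • (L v) := fun _ _ _ => rfl
  rw [happ, permMap_tprod, Equiv.Perm.sign_inv]
  have h1 : Equiv.symm (extR k m τ) = extR k m τ⁻¹ := extR_inv τ
  rw [h1]

lemma symOn_tprod (h : m ≤ n) (f : Fin n → H) :
    symOn F H n (firstSet n m) (tprod F f)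
      = (m.factorial : F)⁻¹ • ∑ σ : Perm (Fin m), tprod F (fun p => f (extL n m h σ p)) := by
  rw [symOn_firstSet F H h, LinearMap.smul_apply, LinearMap.sum_apply]
  congr 1
  refine Fintype.sum_equiv (Equiv.inv _) _ _ fun σ => ?_
  simp only [Equiv.inv_apply]
  rw [permMap_tprod]
  have h1 : Equiv.symm (extL n m h σ) = extL n m h σ⁻¹ := extL_inv h σ
  rw [h1]

/-- Key structural lemma: the projection applied to an elementary split tensor. -/
lemma symAlt_tprod_append (k m : ℕ) (h : Fin k → H) (x : Fin m → H) :
    (symOn F H (k + m) (firstSet (k + m) k) ∘ₗ altOn F H (k + m) (firstSet (k + m) k)ᶜ)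
      (tprod F (Fin.append h x))
      = ((k.factorial : F)⁻¹ * (m.factorial : F)⁻¹) • elem F H k m h x := by
  rw [LinearMap.comp_apply, altOn_tprod F H k m, map_smul, map_sum]
  have step : ∀ τ : Perm (Fin m),
      symOn F H (k + m) (firstSet (k + m) k)
        (((Equiv.Perm.sign τ : ℤ) : F) • tprod F (fun p => Fin.append h x (extR k m τ p)))
      = ((Equiv.Perm.sign τ : ℤ) : F) • ((k.factorial : F)⁻¹ •
          ∑ σ : Perm (Fin k), tprod F (Fin.append (h ∘ σ) (x ∘ τ))) := by
    intro τ
    rw [map_smul]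
    congr 1
    rw [append_comp_extR, symOn_tprod F H (Nat.le_add_right k m)]
    congr 1
    refine Finset.sum_congr rfl fun σ _ => ?_
    rw [append_comp_extL]
  rw [Finset.sum_congr rfl fun τ _ => step τ]
  rw [elem]
  simp only [zsmul_eq_cast_smul, Finset.smul_sum, smul_smul]
  rw [Finset.sum_comm]
  refine Finset.sum_congr rfl fun σ _ => Finset.sum_congr rfl fun τ _ => ?_
  congr 1
  ring

end TensorLemmas

section Insert

variable {k q : ℕ}

/-- The permutation of `Fin (q+1)` sending `0 ↦ i` and `succ s ↦ succAbove i (τ' s)`. -/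
def permInsert (q : ℕ) (i : Fin (q + 1)) (τ' : Perm (Fin q)) : Perm (Fin (q + 1)) :=
  (Fin.cycleRange i)⁻¹ * Equiv.Perm.decomposeFin.symm (0, τ')

lemma permInsert_zero (i : Fin (q + 1)) (τ' : Perm (Fin q)) : permInsert q i τ' 0 = i := by
  simp [permInsert, Equiv.Perm.mul_apply, Equiv.Perm.decomposeFin_symm_apply_zero,
    Equiv.Perm.inv_def]

lemma permInsert_succ (i : Fin (q + 1)) (τ' : Perm (Fin q)) (s : Fin q) :
    permInsert q i τ' s.succ = i.succAbove (τ' s) := by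
  simp [permInsert, Equiv.Perm.mul_apply, Equiv.Perm.decomposeFin_symm_apply_succ,
    Equiv.Perm.inv_def]

lemma sign_permInsert (i : Fin (q + 1)) (τ' : Perm (Fin q)) :
    Equiv.Perm.sign (permInsert q i τ') = (-1) ^ (i : ℕ) * Equiv.Perm.sign τ' := by
  rw [permInsert, map_mul, map_inv, Fin.sign_cycleRange,
    Equiv.Perm.decomposeFin.symm_sign]
  simp

lemma permInsert_injective :
    Function.Injective (fun p : Fin (q + 1) × Perm (Fin q) => permInsert q p.1 p.2) := by
  rintro ⟨i, τ⟩ ⟨i', τ''⟩ hp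
  simp only at hp
  have hi : i = i' := by
    rw [← permInsert_zero i τ, ← permInsert_zero i' τ'', hp]
  subst hi
  have hτ : Equiv.Perm.decomposeFin.symm (0, τ) = Equiv.Perm.decomposeFin.symm (0, τ'') :=
    mul_left_cancel hp
  have := Equiv.Perm.decomposeFin.symm.injective hτ
  simp only [Prod.mk.injEq] at this
  rw [this.2]

lemma sum_perm_insert {M : Type*} [AddCommMonoid M] (G : Perm (Fin (q + 1)) → M) :
    ∑ τ : Perm (Fin (q + 1)), G τ
      = ∑ i : Fin (q + 1), ∑ τ' : Perm (Fin q), G (permInsert q i τ') := by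
  have hbij : Function.Bijective
      (fun p : Fin (q + 1) × Perm (Fin q) => permInsert q p.1 p.2) := by
    refine (Fintype.bijective_iff_injective_and_card _).2 ⟨permInsert_injective, ?_⟩
    simp [Fintype.card_perm, Nat.factorial_succ, mul_comm]
  have h1 : ∑ p : Fin (q + 1) × Perm (Fin q), G (permInsert q p.1 p.2)
      = ∑ τ : Perm (Fin (q + 1)), G τ :=
    Fintype.sum_bijective _ hbij _ _ fun p => rfl
  rw [← h1, Fintype.sum_prod_type]

/-- Extension of a permutation of `Fin k` to `Fin (k+1)` fixing the last point. -/
abbrev extTop (k : ℕ) (ρ : Perm (Fin k)) : Perm (Fin (k + 1)) :=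
  extL (k + 1) k (Nat.le_succ k) ρ

lemma extL_extTop_apply_ge (π : Perm (Fin k)) (p : Fin (k + (q + 1)))
    (hp : k ≤ (p : ℕ)) :
    extL (k + (q + 1)) (k + 1) (by omega) (extTop k π) p = p := by
  rcases lt_or_ge (p : ℕ) (k + 1) with hp1 | hp1
  · rw [extL_apply_lt _ _ p hp1]
    have h2 : extTop k π ⟨p, hp1⟩ = ⟨p, hp1⟩ :=
      extL_apply_ge _ π ⟨p, hp1⟩ hp
    rw [h2]
    exact Fin.ext rfl
  · exact extL_apply_ge _ _ p hp1

set_option maxHeartbeats 1000000 in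
lemma extL_extTop_apply_lt (π : Perm (Fin k)) (p : Fin (k + (q + 1)))
    (hp : (p : ℕ) < k) :
    extL (k + (q + 1)) (k + 1) (by omega) (extTop k π) p
      = Fin.castLE (Nat.le_add_right k (q + 1)) (π ⟨p, hp⟩) := by
  have hp1 : (p : ℕ) < k + 1 := by omega
  rw [extL_apply_lt _ _ p hp1]
  have h2 : extTop k π ⟨p, hp1⟩ = Fin.castLE (Nat.le_succ k) (π ⟨p, hp⟩) :=
    extL_apply_lt (Nat.le_succ k) π ⟨p, hp1⟩ hp
  rw [h2]
  exact Fin.ext rfl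

/-- Absorption of an inner symmetric permutation. -/
lemma append_comp_extTop_inv {α : Type*} (ρ : Perm (Fin k)) (g : Fin k → α)
    (w : Fin (q + 1) → α) (p : Fin (k + (q + 1))) :
    Fin.append (g ∘ ρ) w (extL (k + (q + 1)) (k + 1) (by omega) (extTop k ρ⁻¹) p)
      = Fin.append g w p := by
  rcases lt_or_ge (p : ℕ) k with hp | hp
  · rw [extL_extTop_apply_lt ρ⁻¹ p hp]
    have hlt : ((Fin.castLE (Nat.le_add_right k (q + 1)) (ρ⁻¹ ⟨p, hp⟩) :
        Fin (k + (q + 1))) : ℕ) < k := (ρ⁻¹ ⟨p, hp⟩).isLt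
    rw [append_val_lt _ _ _ hlt, append_val_lt _ _ _ hp]
    show g (ρ _) = g _
    have h3 : (⟨((Fin.castLE (Nat.le_add_right k (q + 1)) (ρ⁻¹ ⟨p, hp⟩) :
        Fin (k + (q + 1))) : ℕ), hlt⟩ : Fin k) = ρ⁻¹ ⟨p, hp⟩ := Fin.ext rfl
    rw [h3, Equiv.Perm.inv_def, Equiv.apply_symm_apply]
  · rw [extL_extTop_apply_ge ρ⁻¹ p hp, append_val_ge _ _ _ hp, append_val_ge _ _ _ hp]

/-- The key pointwise identity relating the extended permutation action to the
snoc/succAbove description. -/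
lemma append_comp_extL_succ {α : Type*} (ρ' : Perm (Fin (k + 1))) (g : Fin k → α)
    (w : Fin (q + 1) → α) (p : Fin (k + (q + 1))) :
    Fin.append g w (extL (k + (q + 1)) (k + 1) (by omega) ρ' p)
      = Fin.append ((Fin.snoc g (w 0) : Fin (k + 1) → α) ∘ ρ') (w ∘ Fin.succ)
          (Fin.cast (by omega : k + (q + 1) = (k + 1) + q) p) := by
  have hc : k + (q + 1) = (k + 1) + q := by omega
  show Fin.append g w (extL (k + (q + 1)) (k + 1) (by omega) ρ' p)
      = Fin.append ((Fin.snoc g (w 0) : Fin (k + 1) → α) ∘ ρ') (w ∘ Fin.succ)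
          (Fin.cast hc p)
  have hcast : ((Fin.cast hc p : Fin ((k + 1) + q)) : ℕ) = (p : ℕ) := rfl
  rcases lt_or_ge (p : ℕ) (k + 1) with hp | hp
  · rw [extL_apply_lt _ ρ' p hp]
    have hq2 : ((Fin.cast hc p : Fin ((k + 1) + q)) : ℕ) < k + 1 := by
      rw [hcast]; exact hp
    rw [append_val_lt _ _ _ hq2]
    have h4 : ((Fin.snoc g (w 0) : Fin (k + 1) → α) ∘ ρ')
          ⟨((Fin.cast hc p : Fin ((k + 1) + q)) : ℕ), hq2⟩
        = (Fin.snoc g (w 0) : Fin (k + 1) → α) (ρ' ⟨p, hp⟩) := by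
      show (Fin.snoc g (w 0) : Fin (k + 1) → α) (ρ' _) = _
      have : (⟨((Fin.cast hc p : Fin ((k + 1) + q)) : ℕ), hq2⟩ : Fin (k + 1))
          = ⟨p, hp⟩ := Fin.ext hcast
      rw [this]
    rw [h4]
    rcases lt_or_ge ((ρ' ⟨p, hp⟩ : Fin (k + 1)) : ℕ) k with hrk | hrk
    · have hlt : ((Fin.castLE (by omega : k + 1 ≤ k + (q + 1)) (ρ' ⟨p, hp⟩) :
          Fin (k + (q + 1))) : ℕ) < k := hrk
      rw [append_val_lt _ _ _ hlt, snoc_val_lt _ _ _ hrk]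
      exact congrArg g (Fin.ext rfl)
    · have hrek : ((ρ' ⟨p, hp⟩ : Fin (k + 1)) : ℕ) = k := by
        have := (ρ' ⟨p, hp⟩).isLt; omega
      have hge : k ≤ ((Fin.castLE (by omega : k + 1 ≤ k + (q + 1)) (ρ' ⟨p, hp⟩) :
          Fin (k + (q + 1))) : ℕ) := by
        show k ≤ ((ρ' ⟨p, hp⟩ : Fin (k + 1)) : ℕ); omega
      rw [append_val_ge _ _ _ hge, snoc_val_eq _ _ _ hrek]
      refine congrArg w (Fin.ext ?_)
      show ((ρ' ⟨p, hp⟩ : Fin (k + 1)) : ℕ) - k = 0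
      omega
  · rw [extL_apply_ge _ ρ' p hp]
    have hpk : k ≤ (p : ℕ) := by omega
    have hq2 : (k + 1) ≤ ((Fin.cast hc p : Fin ((k + 1) + q)) : ℕ) := by
      rw [hcast]; exact hp
    rw [append_val_ge _ _ _ hpk, append_val_ge _ _ _ hq2]
    show w _ = w (Fin.succ _)
    refine congrArg w (Fin.ext ?_)
    show (p : ℕ) - k = (((Fin.cast hc p : Fin ((k + 1) + q)) : ℕ) - (k + 1)) + 1
    rw [hcast]
    omega

end Insert

section Part2

open PiTensorProduct

/-- Part 2: the explicit formula for `d̆*` on elementary tensors. -/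
lemma dStarOp_elem (k q : ℕ) (h : Fin k → H) (x : Fin (q + 1) → H) :
    dStarOp F H (k + (q + 1)) (k + 1) (elem F H k (q + 1) h x) =
      ∑ i : Fin (q + 1),
        ((-1 : ℤ) ^ (i : ℕ)) •
          tpCast F H ((Nat.add_right_comm k 1 q).trans (Nat.add_assoc k q 1))
            (elem F H (k + 1) q (Fin.snoc h (x i)) (x ∘ i.succAbove)) := by
  have hn : k + 1 ≤ k + (q + 1) := by omega
  have hc : (k + 1) + q = k + (q + 1) := by omega
  have hkf : ((k.factorial : ℕ) : F) ≠ 0 :=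
    Nat.cast_ne_zero.2 (Nat.factorial_ne_zero k)
  have hk1 : ((k + 1 : ℕ) : F) ≠ 0 := Nat.cast_ne_zero.2 (Nat.succ_ne_zero k)
  have hfac : (((k + 1).factorial : ℕ) : F) = ((k + 1 : ℕ) : F) * ((k.factorial : ℕ) : F) := by
    rw [Nat.factorial_succ]; push_cast; ring
  -- Step 1: expand the left-hand side into a triple sum.
  have e1 : dStarOp F H (k + (q + 1)) (k + 1) (elem F H k (q + 1) h x)
      = ∑ ρ : Perm (Fin k), ∑ τ : Perm (Fin (q + 1)), ∑ σ : Perm (Fin (k + 1)),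
          (((k + 1 : ℕ) : F) * (((k + 1).factorial : ℕ) : F)⁻¹ *
            ((Equiv.Perm.sign τ : ℤ) : F)) •
            tprod F (fun p => Fin.append (h ∘ ρ) (x ∘ τ)
              (extL (k + (q + 1)) (k + 1) hn σ p)) := by
    rw [dStarOp, LinearMap.smul_apply]
    simp only [elem, zsmul_eq_cast_smul, map_sum, map_smul, symOn_tprod F H hn,
      Finset.smul_sum, smul_smul]
    refine Finset.sum_congr rfl fun ρ _ => Finset.sum_congr rfl fun τ _ =>
      Finset.sum_congr rfl fun σ _ => ?_
    congr 1
    ring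
  rw [e1]
  -- Step 2: decompose the τ-sum via `permInsert`.
  have e2 : ∀ ρ : Perm (Fin k),
      (∑ τ : Perm (Fin (q + 1)), ∑ σ : Perm (Fin (k + 1)),
          (((k + 1 : ℕ) : F) * (((k + 1).factorial : ℕ) : F)⁻¹ *
            ((Equiv.Perm.sign τ : ℤ) : F)) •
            tprod F (fun p => Fin.append (h ∘ ρ) (x ∘ τ)
              (extL (k + (q + 1)) (k + 1) hn σ p)))
      = ∑ i : Fin (q + 1), ∑ τ' : Perm (Fin q), ∑ σ : Perm (Fin (k + 1)),
          (((k + 1 : ℕ) : F) * (((k + 1).factorial : ℕ) : F)⁻¹ *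
            ((Equiv.Perm.sign (permInsert q i τ') : ℤ) : F)) •
            tprod F (fun p => Fin.append (h ∘ ρ) (x ∘ permInsert q i τ')
              (extL (k + (q + 1)) (k + 1) hn σ p)) :=
    fun ρ => sum_perm_insert _
  rw [Finset.sum_congr rfl fun ρ _ => e2 ρ]
  -- Step 3: reindex the σ-sum and rewrite each term.
  have e4 : ∀ (ρ : Perm (Fin k)) (i : Fin (q + 1)) (τ' : Perm (Fin q))
      (ρ' : Perm (Fin (k + 1))),
      (fun p => Fin.append (h ∘ ρ) (x ∘ permInsert q i τ')
          (extL (k + (q + 1)) (k + 1) hn ((extTop k ρ)⁻¹ * ρ') p))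
      = (fun p => Fin.append ((Fin.snoc h (x i) : Fin (k + 1) → H) ∘ ρ')
          (x ∘ i.succAbove ∘ τ') (Fin.cast hc.symm p)) := by
    intro ρ i τ' ρ'
    funext p
    rw [extL_mul]
    have hinv : (extTop k ρ)⁻¹ = extTop k ρ⁻¹ := extL_inv _ ρ
    rw [hinv]
    show Fin.append (h ∘ ρ) (x ∘ permInsert q i τ')
        (extL (k + (q + 1)) (k + 1) hn (extTop k ρ⁻¹)
          (extL (k + (q + 1)) (k + 1) hn ρ' p)) = _
    rw [append_comp_extTop_inv ρ h (x ∘ permInsert q i τ')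
      (extL (k + (q + 1)) (k + 1) hn ρ' p)]
    rw [append_comp_extL_succ ρ' h (x ∘ permInsert q i τ') p]
    have hw0 : (x ∘ permInsert q i τ') 0 = x i := congrArg x (permInsert_zero i τ')
    have hws : (x ∘ permInsert q i τ') ∘ Fin.succ = x ∘ i.succAbove ∘ τ' :=
      funext fun s => congrArg x (permInsert_succ i τ' s)
    rw [hw0, hws]
  have e3 : ∀ (ρ : Perm (Fin k)) (i : Fin (q + 1)) (τ' : Perm (Fin q)),
      (∑ σ : Perm (Fin (k + 1)),
          (((k + 1 : ℕ) : F) * (((k + 1).factorial : ℕ) : F)⁻¹ *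
            ((Equiv.Perm.sign (permInsert q i τ') : ℤ) : F)) •
            tprod F (fun p => Fin.append (h ∘ ρ) (x ∘ permInsert q i τ')
              (extL (k + (q + 1)) (k + 1) hn σ p)))
      = ∑ ρ' : Perm (Fin (k + 1)),
          (((k + 1 : ℕ) : F) * (((k + 1).factorial : ℕ) : F)⁻¹ *
            ((Equiv.Perm.sign (permInsert q i τ') : ℤ) : F)) •
            tprod F (fun p => Fin.append ((Fin.snoc h (x i) : Fin (k + 1) → H) ∘ ρ')
              (x ∘ i.succAbove ∘ τ') (Fin.cast hc.symm p)) := by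
    intro ρ i τ'
    rw [← Equiv.sum_comp (Equiv.mulLeft ((extTop k ρ)⁻¹))
      (fun σ => (((k + 1 : ℕ) : F) * (((k + 1).factorial : ℕ) : F)⁻¹ *
            ((Equiv.Perm.sign (permInsert q i τ') : ℤ) : F)) •
            tprod F (fun p => Fin.append (h ∘ ρ) (x ∘ permInsert q i τ')
              (extL (k + (q + 1)) (k + 1) hn σ p)))]
    refine Finset.sum_congr rfl fun ρ' _ => ?_
    simp only [Equiv.coe_mulLeft]
    rw [e4 ρ i τ' ρ']
  rw [Finset.sum_congr rfl fun ρ _ => Finset.sum_congr rfl fun i _ =>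
    Finset.sum_congr rfl fun τ' _ => e3 ρ i τ']
  -- Step 4: the ρ-sum is constant; evaluate it.
  rw [Finset.sum_const, Finset.card_univ, Fintype.card_perm, Fintype.card_fin,
    ← Nat.cast_smul_eq_nsmul F]
  -- Step 5: normalize the right-hand side.
  have eR : ∀ i : Fin (q + 1),
      ((-1 : ℤ) ^ (i : ℕ)) •
          tpCast F H (by omega : (k + 1) + q = k + (q + 1))
            (elem F H (k + 1) q (Fin.snoc h (x i)) (x ∘ i.succAbove))
      = ∑ τ' : Perm (Fin q), ∑ ρ' : Perm (Fin (k + 1)),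
          ((((-1 : ℤ) ^ (i : ℕ) * (Equiv.Perm.sign τ' : ℤ) : ℤ)) : F) •
            tprod F (fun p => Fin.append ((Fin.snoc h (x i) : Fin (k + 1) → H) ∘ ρ')
              (x ∘ i.succAbove ∘ τ') (Fin.cast hc.symm p)) := by
    intro i
    rw [elem]
    simp only [map_sum, zsmul_eq_cast_smul, map_smul, tpCast_tprod]
    rw [Finset.smul_sum]
    rw [Finset.sum_comm]
    refine Finset.sum_congr rfl fun τ' _ => ?_
    rw [Finset.smul_sum]
    refine Finset.sum_congr rfl fun ρ' _ => ?_
    rw [smul_smul]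
    congr 1
    push_cast
    ring
  rw [Finset.sum_congr rfl fun i _ => eR i]
  -- Step 6: compare the two sides term by term.
  rw [Finset.smul_sum]
  refine Finset.sum_congr rfl fun i _ => ?_
  rw [Finset.smul_sum]
  refine Finset.sum_congr rfl fun τ' _ => ?_
  rw [Finset.smul_sum]
  refine Finset.sum_congr rfl fun ρ' _ => ?_
  rw [smul_smul]
  congr 1
  have hsgZ : (Equiv.Perm.sign (permInsert q i τ') : ℤ)
      = (-1) ^ (i : ℕ) * (Equiv.Perm.sign τ' : ℤ) := by
    rw [sign_permInsert]
    push_cast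
    ring
  rw [hsgZ]
  have h3 : ((k + 1 : ℕ) : F) * (((k + 1).factorial : ℕ) : F)⁻¹
      = ((k.factorial : ℕ) : F)⁻¹ := by
    rw [hfac, mul_inv, ← mul_assoc, mul_inv_cancel₀ hk1, one_mul]
  rw [h3, ← mul_assoc, mul_inv_cancel₀ hkf, one_mul]

end Part2

section Part1

open PiTensorProduct

lemma tpCast_rfl_apply (n : ℕ) (v : TP F H n) : tpCast F H (rfl : n = n) v = v := by
  simp [tpCast, finCongr_refl, PiTensorProduct.reindex_refl]

lemma tpCast_mem_Hmix {n n' : ℕ} (hn : n = n') (k' : ℕ) (v : TP F H n)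
    (hv : v ∈ Hmix F H n k') : tpCast F H hn v ∈ Hmix F H n' k' := by
  subst hn
  rwa [tpCast_rfl_apply]

lemma elem_mem_Hmix (k m : ℕ) (h : Fin k → H) (x : Fin m → H) :
    elem F H k m h x ∈ Hmix F H (k + m) k := by
  have h1 := symAlt_tprod_append F H k m h x
  have hkf : ((k.factorial : ℕ) : F) ≠ 0 := Nat.cast_ne_zero.2 (Nat.factorial_ne_zero k)
  have hmf : ((m.factorial : ℕ) : F) ≠ 0 := Nat.cast_ne_zero.2 (Nat.factorial_ne_zero m)
  have h2 : elem F H k m h x = ((k.factorial : F) * (m.factorial : F)) •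
      ((symOn F H (k + m) (firstSet (k + m) k) ∘ₗ altOn F H (k + m) (firstSet (k + m) k)ᶜ)
        (tprod F (Fin.append h x))) := by
    rw [h1, smul_smul]
    rw [show ((k.factorial : F) * (m.factorial : F)) *
        ((k.factorial : F)⁻¹ * (m.factorial : F)⁻¹) = 1 by field_simp]
    rw [one_smul]
  rw [h2]
  exact Submodule.smul_mem _ _ ⟨_, rfl⟩

lemma dStarOp_mem (k q : ℕ) :
    ∀ v ∈ Hmix F H (k + (q + 1)) k,
      dStarOp F H (k + (q + 1)) (k + 1) v ∈ Hmix F H (k + (q + 1)) (k + 1) := by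
  rintro v ⟨w, rfl⟩
  set L := symOn F H (k + (q + 1)) (firstSet (k + (q + 1)) k) ∘ₗ
      altOn F H (k + (q + 1)) (firstSet (k + (q + 1)) k)ᶜ with hL
  have hw : w ∈ Submodule.span F (Set.range (PiTensorProduct.tprod F)) := by
    rw [PiTensorProduct.span_tprod_eq_top]; trivial
  have hle : Submodule.span F (Set.range (PiTensorProduct.tprod F)) ≤
      Submodule.comap (dStarOp F H (k + (q + 1)) (k + 1) ∘ₗ L)
        (Hmix F H (k + (q + 1)) (k + 1)) := by
    rw [Submodule.span_le]
    rintro _ ⟨f, rfl⟩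
    simp only [SetLike.mem_coe, Submodule.mem_comap, LinearMap.comp_apply]
    have hsplit : Fin.append (fun i => f (Fin.castAdd (q + 1) i))
        (fun j => f (Fin.natAdd k j)) = f := Fin.append_castAdd_natAdd
    have heq : PiTensorProduct.tprod F f = PiTensorProduct.tprod F
        (Fin.append (fun i => f (Fin.castAdd (q + 1) i)) (fun j => f (Fin.natAdd k j))) := by
      rw [hsplit]
    have h1 : L (PiTensorProduct.tprod F f)
        = ((k.factorial : F)⁻¹ * ((q + 1).factorial : F)⁻¹) •
          elem F H k (q + 1) (fun i => f (Fin.castAdd (q + 1) i))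
            (fun j => f (Fin.natAdd k j)) := by
      rw [hL, heq]
      exact symAlt_tprod_append F H k (q + 1) _ _
    rw [h1, map_smul]
    refine Submodule.smul_mem _ _ ?_
    rw [dStarOp_elem F H k q]
    refine Submodule.sum_mem _ fun i _ => ?_
    rw [zsmul_eq_cast_smul]
    refine Submodule.smul_mem _ _ ?_
    exact tpCast_mem_Hmix F H _ (k + 1) _ (elem_mem_Hmix F H (k + 1) q _ _)
  have := hle hw
  simpa [Submodule.mem_comap] using this

end Part1

/-- Well-definedness of d̆*: for all `k ≥ 1` (here `k+1` with `k : ℕ`) and `q`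
with `n = k + q`, the operator `k·(S_{{1,…,k}} ⊗ id)` maps `H_{k-1,q+1}` into `H_{k,q}`,
and on elementary tensors
`k·(S ⊗ id)(h₁⊙…⊙h_{k-1} ⊗ x₁∧…∧x_{q+1}) =
  Σ_i (-1)^{i-1} h₁⊙…⊙h_{k-1}⊙x_i ⊗ x₁∧…∧x̂_i∧…∧x_{q+1}`. -/
theorem dStarOp_wellDefined (k q : ℕ) :
    (∀ v ∈ Hmix F H (k + (q + 1)) k,
      dStarOp F H (k + (q + 1)) (k + 1) v ∈ Hmix F H (k + (q + 1)) (k + 1)) ∧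
    (∀ (h : Fin k → H) (x : Fin (q + 1) → H),
      dStarOp F H (k + (q + 1)) (k + 1) (elem F H k (q + 1) h x) =
        ∑ i : Fin (q + 1),
          ((-1 : ℤ) ^ (i : ℕ)) •
            tpCast F H (by omega : (k + 1) + q = k + (q + 1))
              (elem F H (k + 1) q (Fin.snoc h (x i)) (x ∘ i.succAbove))) := by
  exact ⟨dStarOp_mem F H k q, fun h x => dStarOp_elem F H k q h x⟩

end
end
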